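/- arXiv:1711.08024 — 7 statements merged into one kernel-verified Lean document; each statement's English description precedes it below -/
import Mathlib

section
/- Let n ≥ 1, write I = [0,1], and let I' ⊆ I be a closed subinterval with nonempty interior. Let Q be a compact Hausdorff topological space and let f : I × Q → ℂⁿ be a continuous map such that for every q ∈ Q the path f(·,q) : I' → ℂⁿ is full. Then there exist N ∈ ℕ and continuous functions g₁, …, g_N : I → ℂ, each vanishing outside I', such that for every q ∈ Q the N vectors ∫₀¹ gᵢ(s) f(s,q) ds (i = 1,…,N) span ℂⁿ; equivalently, the ℂ-linear map ℂᴺ → ℂⁿ, (t₁,…,t_N) ↦ ∑ᵢ tᵢ ∫₀¹ gᵢ(s) f(s,q) ds — the derivative at t = 0 of t ↦ ∫₀¹ (1 + ∑ᵢ tᵢ gᵢ(s)) f(s,q) ds — is surjective for every q ∈ Q. (The function h(s,t) = 1 + ∑ᵢ tᵢ gᵢ(s) is called a period dominating multiplier of f.) -/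
open MeasureTheory Set intervalIntegral Submodule

/-- A continuous real function whose square has zero integral on `[0,1]` vanishes there. -/
lemma sq_integral_zero_aux {w : ℝ → ℝ} (hw : Continuous w)
    (h : ∫ s in (0:ℝ)..1, w s * w s = 0) : ∀ s ∈ Icc (0:ℝ) 1, w s = 0 := by
  intro s₀ hs₀
  by_contra hne
  have hU : IsOpen {s : ℝ | w s ≠ 0} := isOpen_compl_singleton.preimage hw
  obtain ⟨ε, hε, hball⟩ := Metric.isOpen_iff.1 hU s₀ hne
  rw [Real.ball_eq_Ioo] at hball
  have hpos : 0 < ∫ s in (0:ℝ)..1, w s * w s := by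
    rw [integral_pos_iff_support_of_nonneg_ae
      (Filter.Eventually.of_forall fun s => mul_self_nonneg (w s))
      ((hw.mul hw).intervalIntegrable _ _)]
    refine ⟨zero_lt_one, ?_⟩
    have hsub : Ioo (max (s₀ - ε) 0) (min (s₀ + ε) 1)
        ⊆ Function.support (fun s => w s * w s) ∩ Ioc 0 1 := by
      intro x hx
      have hx1 : x ∈ Ioo (s₀ - ε) (s₀ + ε) :=
        ⟨lt_of_le_of_lt (le_max_left _ _) hx.1, lt_of_lt_of_le hx.2 (min_le_left _ _)⟩
      refine ⟨mul_self_ne_zero.2 (hball hx1), ?_⟩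
      exact ⟨lt_of_le_of_lt (le_max_right _ _) hx.1, le_of_lt (lt_of_lt_of_le hx.2 (min_le_right _ _))⟩
    refine lt_of_lt_of_le ?_ (measure_mono hsub)
    rw [Real.volume_Ioo]
    apply ENNReal.ofReal_pos.2
    have h1 := hs₀.1; have h2 := hs₀.2
    have : max (s₀ - ε) 0 < min (s₀ + ε) 1 := by
      rw [max_lt_iff, lt_min_iff, lt_min_iff]
      exact ⟨⟨by linarith, by linarith⟩, ⟨by linarith, one_pos⟩⟩
    linarith [this]
  exact hpos.ne' h

/-- A continuous real function all of whose polynomial moments on `[0,1]` vanish is zero there. -/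
lemma vanish_of_poly_moments {w : ℝ → ℝ} (hw : Continuous w)
    (h : ∀ p : Polynomial ℝ, ∫ s in (0:ℝ)..1, p.eval s * w s = 0) :
    ∀ s ∈ Icc (0:ℝ) 1, w s = 0 := by
  have h01 : (0:ℝ) ≤ 1 := zero_le_one
  set X : Set ℝ := Icc (0:ℝ) 1 with hX
  set wc : C(X, ℝ) := ⟨fun x => w x, hw.comp continuous_subtype_val⟩ with hwc
  set Λ : C(X, ℝ) → ℝ := fun g => ∫ s in (0:ℝ)..1, g (projIcc 0 1 h01 s) * w s with hΛ
  have hint : ∀ g : C(X, ℝ), IntervalIntegrable (fun s => g (projIcc 0 1 h01 s) * w s)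
      volume 0 1 :=
    fun g => ((g.continuous.comp continuous_projIcc).mul hw).intervalIntegrable _ _
  have hcont : Continuous Λ := by
    refine (LipschitzWith.of_dist_le_mul (K := ‖wc‖₊) ?_).continuous
    intro g₁ g₂
    have hsub : Λ g₁ - Λ g₂
        = ∫ s in (0:ℝ)..1, (g₁ (projIcc 0 1 h01 s) - g₂ (projIcc 0 1 h01 s)) * w s := by
      rw [hΛ, ← intervalIntegral.integral_sub (hint g₁) (hint g₂)]
      congr 1; funext s; ring
    have hb : ∀ s ∈ Set.uIoc (0:ℝ) 1,
        ‖(g₁ (projIcc 0 1 h01 s) - g₂ (projIcc 0 1 h01 s)) * w s‖ ≤ dist g₁ g₂ * ‖wc‖ := by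
      intro s hs
      rw [norm_mul]
      have hsX : s ∈ X := by
        rw [Set.uIoc_of_le h01] at hs
        exact Ioc_subset_Icc_self hs
      have h1 : ‖g₁ (projIcc 0 1 h01 s) - g₂ (projIcc 0 1 h01 s)‖ ≤ dist g₁ g₂ := by
        rw [← ContinuousMap.sub_apply, dist_eq_norm]
        exact ContinuousMap.norm_coe_le_norm _ _
      have h2 : ‖w s‖ ≤ ‖wc‖ := by
        have := ContinuousMap.norm_coe_le_norm wc ⟨s, hsX⟩
        simpa [hwc] using this
      exact mul_le_mul h1 h2 (norm_nonneg _) dist_nonneg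
    have := intervalIntegral.norm_integral_le_of_norm_le_const hb
    rw [← hsub] at this
    rw [dist_eq_norm]
    calc ‖Λ g₁ - Λ g₂‖ ≤ dist g₁ g₂ * ‖wc‖ * |1 - 0| := this
    _ = ↑‖wc‖₊ * dist g₁ g₂ := by rw [coe_nnnorm]; simp [mul_comm]
  have hS : IsClosed (Λ ⁻¹' {0}) := (isClosed_singleton).preimage hcont
  have hsubset : (polynomialFunctions X : Set C(X, ℝ)) ⊆ Λ ⁻¹' {0} := by
    intro g hg
    rw [polynomialFunctions_coe] at hg
    obtain ⟨p, rfl⟩ := hg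
    have : Λ (Polynomial.toContinuousMapOnAlgHom X p)
        = ∫ s in (0:ℝ)..1, p.eval s * w s := by
      apply intervalIntegral.integral_congr
      intro s hs
      rw [Set.uIcc_of_le h01] at hs
      simp [Polynomial.toContinuousMapOnAlgHom, Polynomial.toContinuousMapOn,
        Polynomial.toContinuousMap, projIcc_of_mem h01 hs]
    simp only [Set.mem_preimage, Set.mem_singleton_iff]
    exact this.trans (h p)
  have hclosure : (closure (polynomialFunctions X : Set C(X, ℝ))) ⊆ Λ ⁻¹' {0} :=
    hS.closure_subset_iff.2 hsubset
  have htop2 : (polynomialFunctions X).topologicalClosure = ⊤ :=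
    polynomialFunctions_closure_eq_top 0 1
  have htop : closure (polynomialFunctions X : Set C(X, ℝ)) = Set.univ := by
    rw [← Subalgebra.topologicalClosure_coe, htop2]; rfl
  have hwS : Λ wc = 0 := by
    have : wc ∈ Λ ⁻¹' {0} := hclosure (by rw [htop]; trivial)
    simpa using this
  have hval : Λ wc = ∫ s in (0:ℝ)..1, w s * w s := by
    apply intervalIntegral.integral_congr
    intro s hs
    rw [Set.uIcc_of_le h01] at hs
    simp [hwc, projIcc_of_mem h01 hs]
  exact sq_integral_zero_aux hw (hval ▸ hwS)

lemma poly_moments_of_monomial {w : ℝ → ℝ} (hw : Continuous w)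
    (h : ∀ i : ℕ, ∫ s in (0:ℝ)..1, s ^ i * w s = 0) (p : Polynomial ℝ) :
    ∫ s in (0:ℝ)..1, p.eval s * w s = 0 := by
  have hrw : (fun s => p.eval s * w s)
      = fun s => ∑ i ∈ Finset.range (p.natDegree + 1), p.coeff i * (s ^ i * w s) := by
    funext s
    rw [Polynomial.eval_eq_sum_range, Finset.sum_mul]
    congr 1; funext i; ring
  rw [hrw, intervalIntegral.integral_finset_sum]
  · refine Finset.sum_eq_zero fun i _ => ?_
    rw [intervalIntegral.integral_const_mul, h i, mul_zero]
  · intro i _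
    exact (continuous_const.mul ((continuous_pow i).mul hw)).intervalIntegrable _ _

lemma exists_fin_li {E : Type*} [AddCommGroup E] [Module ℂ E] [FiniteDimensional ℂ E]
    {r : ℕ} (hr : Module.finrank ℂ E = r) {ι : Type*} (u : ι → E)
    (h : span ℂ (Set.range u) = ⊤) :
    ∃ τ : Fin r → ι, LinearIndependent ℂ (u ∘ τ) := by
  obtain ⟨t, hts, hsp, hli⟩ := exists_linearIndependent ℂ (Set.range u)
  rw [h] at hsp
  have htf : t.Finite := hli.setFinite
  haveI := htf.fintype
  let B : Module.Basis t ℂ E := Module.Basis.mk hli (by rw [Subtype.range_coe, hsp])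
  have hcard : Fintype.card t = r := by
    rw [← Module.finrank_eq_card_basis B, hr]
  let e : Fin r ≃ t := (Fintype.equivFinOfCardEq hcard).symm
  have hmem : ∀ j : Fin r, ((e j : E)) ∈ Set.range u := fun j => hts (e j).2
  refine ⟨fun j => (hmem j).choose, ?_⟩
  have heq : u ∘ (fun j => (hmem j).choose) = (fun x : t => (x : E)) ∘ e := by
    funext j
    exact (hmem j).choose_spec
  rw [heq]
  exact hli.comp e e.injective

lemma det_ne_zero_iff_li {n : ℕ} (x : Fin n → EuclideanSpace ℂ (Fin n)) :
    (Matrix.of fun j k => WithLp.equiv 2 (Fin n → ℂ) (x j) k).det ≠ 0 ↔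
      LinearIndependent ℂ x := by
  rw [← isUnit_iff_ne_zero, ← Matrix.isUnit_iff_isUnit_det,
    ← Matrix.linearIndependent_rows_iff_isUnit]
  have : (fun j => (Matrix.of fun j k => WithLp.equiv 2 (Fin n → ℂ) (x j) k) j)
      = ⇑(WithLp.linearEquiv 2 ℂ (Fin n → ℂ)).toLinearMap ∘ x := by
    funext j; rfl
  show LinearIndependent ℂ (fun j => (Matrix.of fun j k => WithLp.equiv 2 (Fin n → ℂ) (x j) k) j) ↔ _
  rw [this]
  exact LinearMap.linearIndependent_iff _ (LinearMap.ker_eq_bot_of_injective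
    (WithLp.linearEquiv 2 ℂ (Fin n → ℂ)).injective) (v := x)

/-- **Period dominating multipliers** (Lemma 2.1 in Alarcón–Forstnerič–López, JGEA 2017).
Let `I = [0,1]` and let `I' = [a,b] ⊆ I` be a closed subinterval with nonempty interior.
Let `Q` be a compact Hausdorff space and `f : I × Q → ℂⁿ` continuous such that `f(·,q)` is
full on `I'` for each `q ∈ Q`. Then there are finitely many continuous functions
`g₁, …, g_N : I → ℂ` supported on `I'` such that for every `q` the vectors
`∫₀¹ gᵢ(s) f(s,q) ds` span `ℂⁿ`. -/
theorem period_dominating_multiplier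
    (n : ℕ) (hn : 1 ≤ n) (a b : ℝ) (ha : 0 ≤ a) (hab : a < b) (hb : b ≤ 1)
    (Q : Type*) [TopologicalSpace Q] [CompactSpace Q] [T2Space Q]
    (f : ℝ × Q → EuclideanSpace ℂ (Fin n))
    (hf : ContinuousOn f ((Set.Icc (0:ℝ) 1) ×ˢ (Set.univ : Set Q)))
    (hfull : ∀ q : Q,
      Submodule.span ℂ ((fun s => f (s, q)) '' Set.Icc a b) = ⊤) :
    ∃ (N : ℕ) (g : Fin N → ℝ → ℂ),
      (∀ i, Continuous (g i)) ∧
      (∀ i, ∀ s : ℝ, s ∉ Set.Icc a b → g i s = 0) ∧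
      (∀ q : Q, Submodule.span ℂ
        (Set.range (fun i : Fin N => ∫ s in (0:ℝ)..1, g i s • f (s, q))) = ⊤) := by
  classical
  have h01 : (0:ℝ) ≤ 1 := zero_le_one
  have hfr : Module.finrank ℂ (EuclideanSpace ℂ (Fin n)) = n := finrank_euclideanSpace_fin
  -- the bump function
  set φ : ℝ → ℝ := fun s => max 0 ((s - a) * (b - s)) with hφdef
  have hφcont : Continuous φ :=
    continuous_const.max (((continuous_id.sub continuous_const)).mul
      (continuous_const.sub continuous_id))
  have hφ0 : ∀ s : ℝ, s ∉ Icc a b → φ s = 0 := by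
    intro s hs
    rw [Set.mem_Icc, not_and_or, not_le, not_le] at hs
    have : (s - a) * (b - s) ≤ 0 := by
      rcases hs with hs | hs
      · exact mul_nonpos_of_nonpos_of_nonneg (by linarith) (by linarith)
      · exact mul_nonpos_of_nonneg_of_nonpos (by linarith) (by linarith)
    simp [hφdef, max_eq_left this]
  have hφpos : ∀ s ∈ Ioo a b, 0 < φ s := by
    intro s hs
    have : 0 < (s - a) * (b - s) := mul_pos (by linarith [hs.1]) (by linarith [hs.2])
    simp [hφdef, lt_max_iff, this]
  -- continuous extension of f
  set F : ℝ × Q → EuclideanSpace ℂ (Fin n) := fun p => f ((projIcc 0 1 h01 p.1 : ℝ), p.2) with hFdef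
  have hmemF : ∀ p : ℝ × Q, (((projIcc 0 1 h01 p.1 : ℝ)), p.2) ∈
      (Set.Icc (0:ℝ) 1) ×ˢ (Set.univ : Set Q) :=
    fun p => ⟨(projIcc 0 1 h01 p.1).2, trivial⟩
  have hFcont : Continuous F :=
    hf.comp_continuous (((continuous_subtype_val.comp continuous_projIcc).comp
      continuous_fst).prodMk continuous_snd) hmemF
  have hFeq : ∀ s ∈ Icc (0:ℝ) 1, ∀ q : Q, F (s, q) = f (s, q) := by
    intro s hs q
    simp only [hFdef, projIcc_of_mem h01 hs]
  -- the moment maps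
  set g0 : ℕ → ℝ → ℂ := fun i s => ((s ^ i * φ s : ℝ) : ℂ) with hg0def
  have hg0cont : ∀ i, Continuous (g0 i) :=
    fun i => Complex.continuous_ofReal.comp ((continuous_pow i).mul hφcont)
  set v : ℕ → Q → EuclideanSpace ℂ (Fin n) := fun i q => ∫ s in (0:ℝ)..1, g0 i s • F (s, q) with hvdef
  have hIcont : ∀ (i : ℕ) (q : Q), Continuous fun s => g0 i s • F (s, q) :=
    fun i q => (hg0cont i).smul (hFcont.comp (continuous_id.prodMk continuous_const))
  have hInt : ∀ (i : ℕ) (q : Q),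
      IntervalIntegrable (fun s => g0 i s • F (s, q)) volume 0 1 :=
    fun i q => (hIcont i q).intervalIntegrable _ _
  have hvcont : ∀ i, Continuous (v i) := by
    intro i
    apply continuous_parametric_intervalIntegral_of_continuous'
      (f := fun (q : Q) (s : ℝ) => g0 i s • F (s, q)) (μ := volume)
    exact ((hg0cont i).comp continuous_snd).smul
      (hFcont.comp (continuous_snd.prodMk continuous_fst))
  -- the basic spanning property
  set P : ℕ → Q → Prop := fun N q => span ℂ (Set.range fun i : Fin N => v i q) = ⊤ with hPdef
  -- criterion via determinants
  have hdet : ∀ (N : ℕ) (q : Q),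
      P N q ↔ ∃ σ : Fin n → Fin N,
        (Matrix.of fun j k => WithLp.equiv 2 (Fin n → ℂ) (v (σ j : ℕ) q) k).det ≠ 0 := by
    intro N q
    constructor
    · intro hP
      obtain ⟨τ, hτ⟩ := exists_fin_li hfr (fun i : Fin N => v i q) hP
      exact ⟨τ, (det_ne_zero_iff_li _).2 hτ⟩
    · rintro ⟨σ, hσ⟩
      have hli : LinearIndependent ℂ fun j : Fin n => v (σ j : ℕ) q :=
        (det_ne_zero_iff_li _).1 hσ
      have hsp : span ℂ (Set.range fun j : Fin n => v (σ j : ℕ) q) = ⊤ :=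
        hli.span_eq_top_of_card_eq_finrank' (by simp [hfr])
      show span ℂ (Set.range fun i : Fin N => v (i : ℕ) q) = ⊤
      rw [← top_le_iff, ← hsp]
      apply span_mono
      rintro - ⟨j, rfl⟩
      exact ⟨σ j, rfl⟩
  -- openness
  have hopen : ∀ N, IsOpen {q : Q | P N q} := by
    intro N
    have : {q : Q | P N q} = ⋃ σ : Fin n → Fin N,
        (fun q => (Matrix.of fun j k =>
          WithLp.equiv 2 (Fin n → ℂ) (v (σ j : ℕ) q) k).det) ⁻¹' {(0:ℂ)}ᶜ := by
      ext q
      simp only [Set.mem_setOf_eq, Set.mem_iUnion, Set.mem_preimage, Set.mem_compl_iff,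
        Set.mem_singleton_iff]
      exact hdet N q
    rw [this]
    apply isOpen_iUnion
    intro σ
    apply IsOpen.preimage ?_ isOpen_compl_singleton
    apply Continuous.matrix_det
    apply continuous_matrix
    intro j k
    exact (continuous_apply k).comp ((PiLp.continuous_ofLp 2 _).comp (hvcont (σ j)))
  -- each point admits some N
  have hex : ∀ q : Q, ∃ N, P N q := by
    intro q
    have htop : span ℂ (Set.range fun i : ℕ => v i q) = ⊤ := by
      by_contra hne
      have hV : (span ℂ (Set.range fun i : ℕ => v i q))ᗮ ≠ ⊥ := fun h =>
        hne (Submodule.orthogonal_eq_bot_iff.1 h)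
      obtain ⟨ξ, hξV, hξ0⟩ := Submodule.ne_bot_iff _ |>.1 hV
      have hinner : ∀ i : ℕ, (inner ℂ ξ (v i q) : ℂ) = 0 := fun i =>
        inner_eq_zero_symm.2 (hξV _ (subset_span (Set.mem_range_self i)))
      set u : ℝ → ℂ := fun s => (inner ℂ ξ (F (s, q)) : ℂ) with hudef
      have hucont : Continuous u :=
        (innerSL ℂ ξ).continuous.comp (hFcont.comp (continuous_id.prodMk continuous_const))
      have hmom : ∀ i : ℕ, ∫ s in (0:ℝ)..1, ((s ^ i * φ s : ℝ) : ℂ) * u s = 0 := by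
        intro i
        have hcomm := (innerSL ℂ ξ).intervalIntegral_comp_comm (hInt i q)
        have h0 : (∫ s in (0:ℝ)..1, (innerSL ℂ ξ) (g0 i s • F (s, q))) = 0 := by
          rw [hcomm]
          exact hinner i
        refine Eq.trans (intervalIntegral.integral_congr fun s _ => ?_) h0
        simp only [innerSL_apply_apply, inner_smul_right]
        rfl
      -- real and imaginary parts
      have hmomR : ∀ i : ℕ, ∫ s in (0:ℝ)..1, s ^ i * (φ s * (u s).re) = 0 := by
        intro i
        have hint : IntervalIntegrable (fun s => ((s ^ i * φ s : ℝ) : ℂ) * u s) volume 0 1 :=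
          ((Complex.continuous_ofReal.comp ((continuous_pow i).mul hφcont)).mul
            hucont).intervalIntegrable _ _
        have hcm := Complex.reCLM.intervalIntegral_comp_comm hint
        rw [hmom i] at hcm
        simp only [map_zero] at hcm
        refine Eq.trans (intervalIntegral.integral_congr fun s _ => ?_) hcm
        simp only [Complex.reCLM_apply, Complex.re_ofReal_mul]
        ring
      have hmomI : ∀ i : ℕ, ∫ s in (0:ℝ)..1, s ^ i * (φ s * (u s).im) = 0 := by
        intro i
        have hint : IntervalIntegrable (fun s => ((s ^ i * φ s : ℝ) : ℂ) * u s) volume 0 1 :=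
          ((Complex.continuous_ofReal.comp ((continuous_pow i).mul hφcont)).mul
            hucont).intervalIntegrable _ _
        have hcm := Complex.imCLM.intervalIntegral_comp_comm hint
        rw [hmom i] at hcm
        simp only [map_zero] at hcm
        refine Eq.trans (intervalIntegral.integral_congr fun s _ => ?_) hcm
        simp only [Complex.imCLM_apply, Complex.im_ofReal_mul]
        ring
      have hRcont : Continuous fun s => φ s * (u s).re :=
        hφcont.mul (Complex.continuous_re.comp hucont)
      have hIcont' : Continuous fun s => φ s * (u s).im :=
        hφcont.mul (Complex.continuous_im.comp hucont)
      have hRzero := vanish_of_poly_moments hRcont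
        (poly_moments_of_monomial hRcont hmomR)
      have hIzero := vanish_of_poly_moments hIcont'
        (poly_moments_of_monomial hIcont' hmomI)
      -- u vanishes on (a,b), hence on [a,b]
      have hu0 : ∀ s ∈ Ioo a b, u s = 0 := by
        intro s hs
        have hs01 : s ∈ Icc (0:ℝ) 1 := ⟨le_trans ha (le_of_lt hs.1), le_trans (le_of_lt hs.2) hb⟩
        have h1 := hRzero s hs01
        have h2 := hIzero s hs01
        have hφs := (hφpos s hs).ne'
        apply Complex.ext
        · simpa using (mul_eq_zero.1 h1).resolve_left hφs
        · simpa using (mul_eq_zero.1 h2).resolve_left hφs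
      have hu0' : ∀ s ∈ Icc a b, u s = 0 := by
        have hc : Set.EqOn u 0 (closure (Ioo a b)) :=
          Set.EqOn.closure (fun s hs => hu0 s hs) hucont continuous_const
        rw [closure_Ioo hab.ne] at hc
        exact fun s hs => hc hs
      -- contradiction with fullness
      have hker : ((fun s => f (s, q)) '' Icc a b) ⊆
          (LinearMap.ker (innerSL ℂ ξ).toLinearMap : Set (EuclideanSpace ℂ (Fin n))) := by
        rintro - ⟨s, hs, rfl⟩
        have hs01 : s ∈ Icc (0:ℝ) 1 := ⟨le_trans ha hs.1, le_trans hs.2 hb⟩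
        have : (inner ℂ ξ (f (s, q)) : ℂ) = 0 := by
          rw [← hFeq s hs01 q]
          exact hu0' s hs
        simpa [LinearMap.mem_ker, innerSL_apply_apply] using this
      have hle : (⊤ : Submodule ℂ (EuclideanSpace ℂ (Fin n))) ≤
          LinearMap.ker (innerSL ℂ ξ).toLinearMap := by
        rw [← hfull q]
        exact span_le.2 hker
      have hzz : (inner ℂ ξ ξ : ℂ) = 0 := by
        have := hle (Submodule.mem_top (x := ξ))
        simpa [LinearMap.mem_ker, innerSL_apply_apply] using this
      exact hξ0 (inner_self_eq_zero.1 hzz)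
    obtain ⟨τ, hτ⟩ := exists_fin_li hfr (fun i : ℕ => v i q) htop
    set N := (Finset.univ.sup τ) + 1 with hN
    refine ⟨N, (hdet N q).2 ⟨fun j => ⟨τ j, Nat.lt_succ_of_le (Finset.le_sup (Finset.mem_univ j))⟩,
      (det_ne_zero_iff_li _).2 ?_⟩⟩
    exact hτ
  -- compactness
  have hmono : ∀ {N N' : ℕ}, N ≤ N' → ∀ q, P N q → P N' q := by
    intro N N' hNN q hP
    have hP' : span ℂ (Set.range fun i : Fin N => v (i : ℕ) q) = ⊤ := hP
    show span ℂ (Set.range fun i : Fin N' => v (i : ℕ) q) = ⊤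
    rw [← top_le_iff, ← hP']
    apply span_mono
    rintro - ⟨i, rfl⟩
    exact ⟨Fin.castLE hNN i, rfl⟩
  obtain ⟨N, hNall⟩ := IsCompact.elim_directed_cover (isCompact_univ (X := Q))
    (fun N : ℕ => {q : Q | P N q}) hopen
    (fun q _ => Set.mem_iUnion.2 (hex q))
    (fun N M => ⟨max N M, fun q hq => hmono (le_max_left _ _) q hq,
      fun q hq => hmono (le_max_right _ _) q hq⟩)
  refine ⟨N, fun i s => g0 (i : ℕ) s, fun i => hg0cont i, ?_, ?_⟩
  · intro i s hs
    simp [hg0def, hφ0 s hs]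
  · intro q
    have hPq : span ℂ (Set.range fun i : Fin N => v (i : ℕ) q) = ⊤ := hNall (Set.mem_univ q)
    have heq : (fun i : Fin N => ∫ s in (0:ℝ)..1, g0 (i : ℕ) s • f (s, q))
        = fun i : Fin N => v (i : ℕ) q := by
      funext i
      apply intervalIntegral.integral_congr
      intro s hs
      rw [Set.uIcc_of_le h01] at hs
      show g0 (i : ℕ) s • f (s, q) = g0 (i : ℕ) s • F (s, q)
      rw [hFeq s hs q]
    show span ℂ (Set.range fun i : Fin N =>
      ∫ s in (0:ℝ)..1, g0 (i : ℕ) s • f (s, q)) = ⊤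
    rw [heq]
    exact hPq
end

section
/- Let n ≥ 1, write I = [0,1], and let I' ⊆ I be a closed subinterval with nonempty interior. Let Q be a compact Hausdorff topological space and let f : I × Q → ℂⁿ be a continuous map such that for every q ∈ Q the path f(·,q) : I' → ℂⁿ is full. Then there exist N ∈ ℕ and points s₁, …, s_N in the interior of I' such that for every q ∈ Q the vectors f(s₁,q), …, f(s_N,q) span ℂⁿ. -/
open Set Submodule

/-- For `n` vectors in `ℂⁿ` (as plain functions), spanning is equivalent to
nonvanishing of the determinant of the associated matrix. -/
lemma span_range_eq_top_iff_det_ne_zero (n : ℕ) (v : Fin n → (Fin n → ℂ)) :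
    Submodule.span ℂ (Set.range v) = ⊤ ↔ (Matrix.of v).det ≠ 0 := by
  have h1 : Set.range v = Set.range (Matrix.of v).row := rfl
  rw [h1, ← range_vecMulLinear, LinearMap.range_eq_top]
  have h2 : Function.Surjective (Matrix.of v).vecMulLinear ↔
      Function.Surjective ((Matrix.of v).vecMul) := Iff.rfl
  rw [h2, Matrix.vecMul_surjective_iff_isUnit, Matrix.isUnit_iff_isUnit_det,
    isUnit_iff_ne_zero]

/-- Transfer of the previous lemma to `EuclideanSpace`. -/
lemma span_range_eq_top_iff_det_ne_zero' (n : ℕ) (v : Fin n → EuclideanSpace ℂ (Fin n)) :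
    Submodule.span ℂ (Set.range v) = ⊤ ↔
      (Matrix.of (fun i j => v i j)).det ≠ 0 := by
  rw [← span_range_eq_top_iff_det_ne_zero]
  have hr : (range fun i j => (v i).ofLp j) = (WithLp.linearEquiv 2 ℂ (Fin n → ℂ)) '' range v := by
    rw [← range_comp]; rfl
  rw [hr, ← LinearEquiv.coe_coe, ← Submodule.map_span]
  exact Iff.symm Submodule.map_eq_top_iff

/-- If `f : I × Q → ℂⁿ` is continuous, `Q` compact Hausdorff, and `f(·,q)` is full on the
closed subinterval `I' = [a,b] ⊆ I = [0,1]` (with nonempty interior) for every `q ∈ Q`,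
then there are finitely many points `s₁, …, s_N` in the interior of `I'` such that
`f(s₁,q), …, f(s_N,q)` span `ℂⁿ` for every `q ∈ Q`. -/
theorem spanning_points_in_subinterval
    (n : ℕ) (hn : 1 ≤ n) (a b : ℝ) (ha : 0 ≤ a) (hab : a < b) (hb : b ≤ 1)
    (Q : Type*) [TopologicalSpace Q] [CompactSpace Q] [T2Space Q]
    (f : ℝ × Q → EuclideanSpace ℂ (Fin n))
    (hf : ContinuousOn f ((Set.Icc (0:ℝ) 1) ×ˢ (Set.univ : Set Q)))
    (hfull : ∀ q : Q,
      Submodule.span ℂ ((fun s => f (s, q)) '' Set.Icc a b) = ⊤) :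
    ∃ (N : ℕ) (s : Fin N → ℝ),
      (∀ i, s i ∈ Set.Ioo a b) ∧
      (∀ q : Q, Submodule.span ℂ
        (Set.range (fun i : Fin N => f (s i, q))) = ⊤) := by
  -- interior points of [0,1]
  have hIoo01 : Set.Ioo a b ⊆ Set.Ioo (0:ℝ) 1 := fun x hx =>
    ⟨lt_of_le_of_lt ha hx.1, lt_of_lt_of_le hx.2 hb⟩
  have hIcc : Set.Icc a b ⊆ Set.Icc (0:ℝ) 1 := fun x hx =>
    ⟨le_trans ha hx.1, le_trans hx.2 hb⟩
  -- continuity of f at points with first coordinate in Ioo 0 1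
  have hcontAt : ∀ (x : ℝ) (q : Q), x ∈ Set.Ioo (0:ℝ) 1 → ContinuousAt f (x, q) := by
    intro x q hx
    apply hf.continuousAt
    have : Set.Ioo (0:ℝ) 1 ×ˢ (Set.univ : Set Q) ∈ nhds ((x, q) : ℝ × Q) :=
      (isOpen_Ioo.prod isOpen_univ).mem_nhds (by exact ⟨hx, trivial⟩)
    exact Filter.mem_of_superset this (Set.prod_mono Set.Ioo_subset_Icc_self subset_rfl)
  -- continuity of q ↦ f (x, q) for x ∈ Ioo a b
  have hcontq : ∀ (x : ℝ), x ∈ Set.Ioo a b → Continuous (fun q : Q => f (x, q)) := by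
    intro x hx
    have : Continuous (fun q : Q => ((x, q) : ℝ × Q)) := by fun_prop
    exact continuous_iff_continuousAt.2 fun q =>
      (hcontAt x q (hIoo01 hx)).comp this.continuousAt
  -- span over the open interval is still everything
  have hfull' : ∀ q : Q,
      Submodule.span ℂ ((fun s => f (s, q)) '' Set.Ioo a b) = ⊤ := by
    intro q
    rw [eq_top_iff, ← hfull q, Submodule.span_le]
    set g : ℝ → EuclideanSpace ℂ (Fin n) := fun s => f (s, q) with hg
    have hgc : ContinuousOn g (closure (Set.Ioo a b)) := by
      rw [closure_Ioo hab.ne]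
      apply hf.comp (Continuous.continuousOn (by fun_prop))
      intro x hx
      exact ⟨hIcc hx, trivial⟩
    have hsub : g '' Set.Icc a b ⊆ closure (g '' Set.Ioo a b) := by
      rw [← closure_Ioo hab.ne]
      exact hgc.image_closure
    intro x hx
    have hx' : x ∈ closure (g '' Set.Ioo a b) := hsub hx
    have hclosed : IsClosed (Submodule.span ℂ (g '' Set.Ioo a b) : Set (EuclideanSpace ℂ (Fin n))) :=
      Submodule.closed_of_finiteDimensional _
    exact closure_minimal Submodule.subset_span hclosed hx'
  -- for each q, choose n points in Ioo a b whose images span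
  have hpts : ∀ q : Q, ∃ s : Fin n → ℝ, (∀ i, s i ∈ Set.Ioo a b) ∧
      (Matrix.of (fun i j => f (s i, q) j)).det ≠ 0 := by
    intro q
    obtain ⟨c, hc_sub, hc_span, hc_li⟩ :=
      exists_linearIndependent ℂ ((fun s => f (s, q)) '' Set.Ioo a b)
    rw [hfull' q] at hc_span
    have hfin : c.Finite := hc_li.setFinite
    haveI : Fintype c := hfin.fintype
    -- c is a basis, so its cardinality is n
    have hcard : Fintype.card c = n := by
      let B : Module.Basis c ℂ (EuclideanSpace ℂ (Fin n)) :=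
        Module.Basis.mk hc_li (by rw [Subtype.range_coe, hc_span])
      have := Module.finrank_eq_card_basis B
      rw [finrank_euclideanSpace_fin] at this
      omega
    let e : Fin n ≃ c := (Fintype.equivFinOfCardEq hcard).symm
    -- choose preimages
    have hchoose : ∀ i : Fin n, ∃ x ∈ Set.Ioo a b, f (x, q) = (e i : EuclideanSpace ℂ (Fin n)) := by
      intro i
      obtain ⟨x, hx, hfx⟩ := hc_sub (e i).2
      exact ⟨x, hx, hfx⟩
    choose s hs hfs using hchoose
    refine ⟨s, hs, ?_⟩
    rw [← span_range_eq_top_iff_det_ne_zero' n (fun i => f (s i, q))]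
    have hrange : Set.range (fun i => f (s i, q)) = c := by
      ext x
      constructor
      · rintro ⟨i, rfl⟩
        show f (s i, q) ∈ c
        rw [hfs i]
        exact (e i).2
      · intro hx
        refine ⟨e.symm ⟨x, hx⟩, ?_⟩
        show f (s (e.symm ⟨x, hx⟩), q) = x
        rw [hfs (e.symm ⟨x, hx⟩), Equiv.apply_symm_apply]
    rw [hrange, hc_span]
  choose sq hsq hdet using hpts
  -- open neighborhoods where the determinant stays nonzero
  let U : Q → Set Q := fun q =>
    {q' | (Matrix.of (fun i j => f (sq q i, q') j)).det ≠ 0}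
  have hUopen : ∀ q, IsOpen (U q) := by
    intro q
    have hcont : Continuous (fun q' : Q => (Matrix.of (fun i j => f (sq q i, q') j)).det) := by
      apply Continuous.matrix_det
      apply continuous_matrix
      intro i j
      exact (continuous_apply j).comp ((PiLp.continuous_ofLp 2 _).comp (hcontq (sq q i) (hsq q i)))
    exact isOpen_compl_singleton.preimage hcont
  have hUmem : ∀ q, q ∈ U q := fun q => hdet q
  obtain ⟨T, hT⟩ := isCompact_univ.elim_finite_subcover U hUopen
    (fun q _ => Set.mem_iUnion.2 ⟨q, hUmem q⟩)
  -- assemble the finite family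
  let N := Fintype.card (↥T × Fin n)
  let e : Fin N ≃ (↥T × Fin n) := (Fintype.equivFin _).symm
  refine ⟨N, fun i => sq ((e i).1 : Q) (e i).2, fun i => hsq _ _, ?_⟩
  intro q
  obtain ⟨t, ht, hq⟩ := Set.mem_iUnion₂.1 (hT (Set.mem_univ q))
  rw [eq_top_iff]
  have hspan_t : Submodule.span ℂ (Set.range (fun j : Fin n => f (sq t j, q))) = ⊤ := by
    rw [span_range_eq_top_iff_det_ne_zero' n (fun j => f (sq t j, q))]
    exact hq
  rw [← hspan_t]
  apply Submodule.span_mono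
  rintro x ⟨j, rfl⟩
  exact ⟨e.symm ⟨⟨t, ht⟩, j⟩, by simp⟩
end

section
/- Let n ≥ 1 and I = [0,1]. Let α : I → ℂⁿ and f : I × I → ℂⁿ be continuous maps such that for every t ∈ I the path f(·,t) : I → ℂⁿ is full, and let ε > 0. Then there exists a continuous function h : I × I → ℂ ∖ {0} such that h(0,t) = h(1,t) = 1 for all t ∈ I and |∫₀¹ h(s,t) f(s,t) ds − α(t)| < ε for all t ∈ I. -/
open MeasureTheory intervalIntegral Set Real

noncomputable section

/-- continuity of a parametric interval integral, from joint continuity. -/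
lemma param_integral_continuous {B : Type*} [NormedAddCommGroup B] [NormedSpace ℝ B]
    [CompleteSpace B] {G : ℝ × ℝ → B} (hG : Continuous G) :
    Continuous fun t => ∫ s in (0:ℝ)..1, G (s, t) := by
  rw [continuous_iff_continuousAt]
  intro t₀
  rw [Metric.continuousAt_iff]
  intro ε hε
  set C : Set (ℝ × ℝ) := Icc (0:ℝ) 1 ×ˢ Icc (t₀ - 1) (t₀ + 1) with hC
  have hCcomp : IsCompact C := isCompact_Icc.prod isCompact_Icc
  have huc := hCcomp.uniformContinuousOn_of_continuous hG.continuousOn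
  rw [Metric.uniformContinuousOn_iff] at huc
  obtain ⟨δ, hδ, hd⟩ := huc (ε / 2) (by linarith)
  refine ⟨min δ 1, by positivity, fun {t} ht => ?_⟩
  have ht1 : dist t t₀ < δ := lt_of_lt_of_le ht (min_le_left _ _)
  have ht2 : dist t t₀ ≤ 1 := le_of_lt (lt_of_lt_of_le ht (min_le_right _ _))
  have htmem : t ∈ Icc (t₀ - 1) (t₀ + 1) := by
    rw [Real.dist_eq, abs_le] at ht2; constructor <;> linarith [ht2.1, ht2.2]
  have hint : ∀ τ, IntervalIntegrable (fun s => G (s, τ)) volume 0 1 := fun τ =>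
    (hG.comp (continuous_id.prodMk continuous_const)).intervalIntegrable _ _
  have key : dist (∫ s in (0:ℝ)..1, G (s, t)) (∫ s in (0:ℝ)..1, G (s, t₀)) ≤ ε / 2 := by
    rw [dist_eq_norm, ← intervalIntegral.integral_sub (hint t) (hint t₀)]
    have := intervalIntegral.norm_integral_le_of_norm_le_const
      (a := (0:ℝ)) (b := 1) (C := ε / 2) (f := fun s => G (s, t) - G (s, t₀)) ?_
    · simpa using this
    · intro s hs
      have hs' : s ∈ Icc (0:ℝ) 1 := by
        rw [Set.uIoc_of_le (by norm_num : (0:ℝ) ≤ 1)] at hs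
        exact ⟨le_of_lt hs.1, hs.2⟩
      have h1 : (s, t) ∈ C := ⟨hs', htmem⟩
      have h2 : (s, t₀) ∈ C := ⟨hs', by constructor <;> simp <;> linarith⟩
      have : dist (G (s, t)) (G (s, t₀)) < ε / 2 := by
        apply hd _ h1 _ h2
        rw [Prod.dist_eq]
        simp only [dist_self]
        exact max_lt hδ ht1
      rw [dist_eq_norm] at this
      exact le_of_lt this
  exact lt_of_le_of_lt key (by linarith)

lemma osc_vanish {B : Type*} [NormedAddCommGroup B] [NormedSpace ℝ B] [CompleteSpace B]
    (G : ℝ × ℝ → B) (hG : Continuous G)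
    (q : ℝ → ℝ) (hq : Continuous q) (hqp : Function.Periodic q 1)
    (hq0 : (∫ x in (0:ℝ)..1, q x) = 0) (Mq : ℝ) (hMqpos : 0 < Mq) (hMq : ∀ x, |q x| ≤ Mq)
    (ε : ℝ) (hε : 0 < ε) :
    ∃ N₀ : ℕ, 0 < N₀ ∧ ∀ N : ℕ, N₀ ≤ N → ∀ t ∈ Icc (0:ℝ) 1,
      ‖∫ s in (0:ℝ)..1, q (N * s) • G (s, t)‖ < ε := by
  set C : Set (ℝ × ℝ) := Icc (0:ℝ) 1 ×ˢ Icc (0:ℝ) 1 with hC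
  have hCcomp : IsCompact C := isCompact_Icc.prod isCompact_Icc
  have huc := hCcomp.uniformContinuousOn_of_continuous hG.continuousOn
  rw [Metric.uniformContinuousOn_iff] at huc
  set ε' : ℝ := ε / (2 * Mq) with hε'
  have hε'pos : 0 < ε' := by positivity
  obtain ⟨δ, hδ, hd⟩ := huc ε' hε'pos
  refine ⟨⌈1/δ⌉₊ + 1, Nat.succ_pos _, fun N hN t ht => ?_⟩
  have hNpos : 0 < N := lt_of_lt_of_le (Nat.succ_pos _) hN
  have hNR : (0:ℝ) < N := by exact_mod_cast hNpos
  have hNne : (N:ℝ) ≠ 0 := ne_of_gt hNR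
  have hNδ : 1 / (N:ℝ) < δ := by
    have h1 : (1:ℝ)/δ < N := by
      have h2 : ((⌈1/δ⌉₊ : ℝ)) < N := by exact_mod_cast lt_of_lt_of_le (Nat.lt_succ_self _) hN
      exact lt_of_le_of_lt (Nat.le_ceil _) h2
    rw [div_lt_iff₀ hNR, mul_comm]
    exact (div_lt_iff₀ hδ).mp h1
  set a : ℕ → ℝ := fun k => (k : ℝ) / N with ha
  have hcont : Continuous fun s => q (N * s) • G (s, t) :=
    (hq.comp (continuous_const.mul continuous_id)).smul
      (hG.comp (continuous_id.prodMk continuous_const))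
  have hint : ∀ c d : ℝ, IntervalIntegrable (fun s => q (N * s) • G (s, t)) volume c d :=
    fun c d => hcont.intervalIntegrable _ _
  have hsplit : (∫ s in (0:ℝ)..1, q (N * s) • G (s, t))
      = ∑ k ∈ Finset.range N, ∫ s in a k..a (k+1), q (N * s) • G (s, t) := by
    have h := intervalIntegral.sum_integral_adjacent_intervals
      (a := a) (n := N) (f := fun s => q (N * s) • G (s, t)) (μ := volume)
      (fun k _ => hint _ _)
    rw [h]
    norm_num [ha, div_self hNne]
  rw [hsplit]
  have hbound : ∀ k, k < N → ‖∫ s in a k..a (k+1), q (N * s) • G (s, t)‖ ≤ Mq * ε' / N := by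
    intro k hk
    have hzero : (∫ s in a k..a (k+1), q (N * s)) = 0 := by
      rw [intervalIntegral.integral_comp_mul_left q hNne]
      have h1 : (N:ℝ) * a k = k := by simp only [ha]; field_simp
      have h2 : (N:ℝ) * a (k+1) = (k:ℝ) + 1 := by
        rw [ha]; push_cast; field_simp
      rw [h1, h2]
      have h3 := hqp.intervalIntegral_add_eq (k : ℝ) (0 : ℝ)
      simp only [zero_add] at h3
      rw [h3, hq0, smul_zero]
    have hconst : IntervalIntegrable (fun s => q (N * s) • G (a k, t)) volume (a k) (a (k+1)) :=
      ((hq.comp (continuous_const.mul continuous_id)).smul continuous_const).intervalIntegrable _ _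
    have hsub : (∫ s in a k..a (k+1), q (N * s) • (G (s, t) - G (a k, t)))
        = (∫ s in a k..a (k+1), q (N * s) • G (s, t))
          - ∫ s in a k..a (k+1), q (N * s) • G (a k, t) := by
      simp only [smul_sub]
      exact intervalIntegral.integral_sub (hint _ _) hconst
    have hdecomp : (∫ s in a k..a (k+1), q (N * s) • G (s, t))
        = ∫ s in a k..a (k+1), q (N * s) • (G (s, t) - G (a k, t)) := by
      rw [hsub, intervalIntegral.integral_smul_const, hzero, zero_smul, sub_zero]
    have hle : a k ≤ a (k+1) := by
      simp only [ha]
      gcongr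
      push_cast; linarith
    have hlen : a (k+1) - a k = 1 / N := by rw [ha]; push_cast; field_simp; ring
    have hnormbd : ∀ s ∈ Set.uIoc (a k) (a (k+1)), ‖q (N * s) • (G (s, t) - G (a k, t))‖ ≤ Mq * ε' := by
      intro s hs
      have hak : a k ≤ s ∧ s ≤ a (k+1) := by
        rw [Set.uIoc_of_le hle] at hs
        exact ⟨le_of_lt hs.1, hs.2⟩
      have hak0 : (0:ℝ) ≤ a k := by rw [ha]; positivity
      have hs01 : s ∈ Icc (0:ℝ) 1 := by
        constructor
        · linarith [hak.1]
        · refine le_trans hak.2 ?_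
          rw [ha, div_le_one hNR]
          exact_mod_cast Nat.succ_le_of_lt hk
      have hak01 : a k ∈ Icc (0:ℝ) 1 := by
        refine ⟨hak0, ?_⟩
        rw [ha, div_le_one hNR]
        exact_mod_cast le_of_lt hk
      have hdist : dist (G (s, t)) (G (a k, t)) < ε' := by
        apply hd _ ⟨hs01, ht⟩ _ ⟨hak01, ht⟩
        rw [Prod.dist_eq]
        simp only [dist_self]
        have hds : dist s (a k) < δ := by
          rw [Real.dist_eq, abs_of_nonneg (by linarith [hak.1])]
          have h5 : s - a k ≤ 1 / N := by linarith [hak.2, hlen]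
          linarith
        exact max_lt hds hδ
      rw [norm_smul, Real.norm_eq_abs]
      have h1 : ‖G (s, t) - G (a k, t)‖ ≤ ε' := by
        rw [← dist_eq_norm]; exact le_of_lt hdist
      exact mul_le_mul (hMq _) h1 (norm_nonneg _) (le_of_lt hMqpos)
    have hbd := intervalIntegral.norm_integral_le_of_norm_le_const hnormbd
    rw [hdecomp]
    rw [hlen] at hbd
    calc ‖∫ s in a k..a (k+1), q (N * s) • (G (s, t) - G (a k, t))‖
        ≤ Mq * ε' * |1 / (N:ℝ)| := hbd
      _ = Mq * ε' / N := by rw [abs_of_pos (by positivity)]; ring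
  have hfinal : ‖∑ k ∈ Finset.range N, ∫ s in a k..a (k+1), q (N * s) • G (s, t)‖ ≤ Mq * ε' := by
    calc ‖∑ k ∈ Finset.range N, ∫ s in a k..a (k+1), q (N * s) • G (s, t)‖
        ≤ ∑ k ∈ Finset.range N, ‖∫ s in a k..a (k+1), q (N * s) • G (s, t)‖ := norm_sum_le _ _
      _ ≤ ∑ _k ∈ Finset.range N, Mq * ε' / N :=
          Finset.sum_le_sum fun k hk => hbound k (Finset.mem_range.mp hk)
      _ = Mq * ε' := by
          rw [Finset.sum_const, Finset.card_range, nsmul_eq_mul]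
          field_simp
  have : Mq * ε' = ε / 2 := by rw [hε']; field_simp
  rw [this] at hfinal
  linarith

lemma tpne : (2 * π) ≠ 0 := by positivity

lemma integral_sin_two_pi : (∫ x in (0:ℝ)..1, Real.sin (2*π*x)) = 0 := by
  have h := intervalIntegral.integral_comp_mul_left (a := (0:ℝ)) (b := 1)
    (fun x => Real.sin x) tpne
  simp only [mul_zero, mul_one] at h
  rw [h, integral_sin]
  simp [Real.cos_two_pi]

lemma integral_abs_sin_two_pi : (∫ x in (0:ℝ)..1, |Real.sin (2*π*x)|) = 2/π := by
  have hcont : Continuous fun x => |Real.sin (2*π*x)| := by fun_prop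
  have h1 : IntervalIntegrable (fun x => |Real.sin (2*π*x)|) volume 0 (1/2) :=
    hcont.intervalIntegrable _ _
  have h2 : IntervalIntegrable (fun x => |Real.sin (2*π*x)|) volume (1/2) 1 :=
    hcont.intervalIntegrable _ _
  rw [← intervalIntegral.integral_add_adjacent_intervals h1 h2]
  have e1 : (∫ x in (0:ℝ)..(1/2), |Real.sin (2*π*x)|)
      = ∫ x in (0:ℝ)..(1/2), Real.sin (2*π*x) := by
    apply intervalIntegral.integral_congr
    intro x hx
    rw [Set.uIcc_of_le (by norm_num : (0:ℝ) ≤ 1/2)] at hx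
    have h0 : 0 ≤ 2*π*x := by
      have := hx.1; positivity
    have hπ' : 2*π*x ≤ π := by nlinarith [hx.2, pi_pos]
    exact abs_of_nonneg (Real.sin_nonneg_of_nonneg_of_le_pi h0 hπ')
  have e2 : (∫ x in (1/2:ℝ)..1, |Real.sin (2*π*x)|)
      = ∫ x in (1/2:ℝ)..1, -Real.sin (2*π*x) := by
    apply intervalIntegral.integral_congr
    intro x hx
    rw [Set.uIcc_of_le (by norm_num : (1/2:ℝ) ≤ 1)] at hx
    have h0 : 0 ≤ 2*π*x - π := by nlinarith [hx.1, pi_pos]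
    have hπ' : 2*π*x - π ≤ π := by nlinarith [hx.2, pi_pos]
    have hs : 0 ≤ Real.sin (2*π*x - π) := Real.sin_nonneg_of_nonneg_of_le_pi h0 hπ'
    rw [Real.sin_sub_pi] at hs
    exact abs_of_nonpos (by linarith)
  have hv := intervalIntegral.integral_comp_mul_left (a := (0:ℝ)) (b := 1/2)
    (fun x => Real.sin x) tpne
  have hw := intervalIntegral.integral_comp_mul_left (a := (1/2:ℝ)) (b := 1)
    (fun x => Real.sin x) tpne
  simp only [mul_zero, mul_one] at hv hw
  have hπhalf : 2 * π * (1/2) = π := by ring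
  rw [hπhalf] at hv hw
  have v1 : (∫ x in (0:ℝ)..(1/2), Real.sin (2*π*x)) = 1/π := by
    rw [hv, integral_sin, Real.cos_zero, Real.cos_pi]
    rw [smul_eq_mul]
    field_simp
    norm_num
  have v2 : (∫ x in (1/2:ℝ)..1, -Real.sin (2*π*x)) = 1/π := by
    rw [intervalIntegral.integral_neg, hw, integral_sin, Real.cos_pi, Real.cos_two_pi]
    rw [smul_eq_mul]
    field_simp
    norm_num
  rw [e1, e2, v1, v2]
  field_simp
  ring

set_option maxHeartbeats 1000000

/-- Approximate version of the prescribed-integrals lemma: given continuous `α : I → ℂⁿ` and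
`f : I × I → ℂⁿ` with `f(·,t)` full for every `t ∈ I`, and given `ε > 0`, there is a continuous
nonvanishing `h : I × I → ℂ∗` with `h(0,t) = h(1,t) = 1` and
`‖∫₀¹ h(s,t) f(s,t) ds − α(t)‖ < ε` for all `t ∈ I`. -/
theorem paths_with_approximate_integrals
    (n : ℕ) (hn : 1 ≤ n)
    (α : ℝ → EuclideanSpace ℂ (Fin n)) (hα : ContinuousOn α (Set.Icc 0 1))
    (f : ℝ × ℝ → EuclideanSpace ℂ (Fin n))
    (hf : ContinuousOn f ((Set.Icc (0:ℝ) 1) ×ˢ (Set.Icc (0:ℝ) 1)))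
    (hfull : ∀ t ∈ Set.Icc (0:ℝ) 1,
      Submodule.span ℂ ((fun s => f (s, t)) '' Set.Icc (0:ℝ) 1) = ⊤)
    (ε : ℝ) (hε : 0 < ε) :
    ∃ h : ℝ × ℝ → ℂ,
      ContinuousOn h ((Set.Icc (0:ℝ) 1) ×ˢ (Set.Icc (0:ℝ) 1)) ∧
      (∀ p ∈ (Set.Icc (0:ℝ) 1) ×ˢ (Set.Icc (0:ℝ) 1), h p ≠ 0) ∧
      (∀ t ∈ Set.Icc (0:ℝ) 1, h (0, t) = 1 ∧ h (1, t) = 1) ∧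
      (∀ t ∈ Set.Icc (0:ℝ) 1,
        ‖(∫ s in (0:ℝ)..1, h (s, t) • f (s, t)) - α t‖ < ε) := by
  classical
  -- clamping to the unit square
  set c : ℝ → ℝ := fun x => max 0 (min 1 x) with hcdef
  have hc_mem : ∀ x : ℝ, c x ∈ Set.Icc (0:ℝ) 1 := fun x =>
    ⟨le_max_left _ _, max_le (by norm_num) (min_le_left _ _)⟩
  have hc_eq : ∀ x ∈ Set.Icc (0:ℝ) 1, c x = x := by
    intro x hx
    simp only [hcdef]
    rw [min_eq_right hx.2, max_eq_right hx.1]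
  have hc_cont : Continuous c := continuous_const.max (continuous_const.min continuous_id)
  set F : ℝ × ℝ → EuclideanSpace ℂ (Fin n) := fun p => f (c p.1, c p.2) with hFdef
  have hFc : Continuous F := by
    apply hf.comp_continuous
    · exact (hc_cont.comp continuous_fst).prodMk (hc_cont.comp continuous_snd)
    · exact fun p => ⟨hc_mem _, hc_mem _⟩
  have hFeq : ∀ s ∈ Set.Icc (0:ℝ) 1, ∀ t ∈ Set.Icc (0:ℝ) 1, F (s, t) = f (s, t) := by
    intro s hs t ht
    simp only [hFdef]
    rw [hc_eq _ hs, hc_eq _ ht]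
  have hFslice : ∀ t : ℝ, Continuous fun s => F (s, t) :=
    fun t => hFc.comp (continuous_id.prodMk continuous_const)
  -- the Gram operator family
  set Φ : ℝ × ℝ → (EuclideanSpace ℂ (Fin n) →L[ℂ] EuclideanSpace ℂ (Fin n)) :=
    fun p => (innerSL ℂ (F p)).smulRight (F p) with hΦdef
  have hΦc : Continuous Φ := by
    have h1 : Continuous fun p => innerSL ℂ (F p) := (innerSL ℂ).continuous.comp hFc
    exact isBoundedBilinearMap_smulRight.continuous.comp (h1.prodMk hFc)
  have hΦslice : ∀ t, Continuous fun s => Φ (s, t) :=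
    fun t => hΦc.comp (continuous_id.prodMk continuous_const)
  have hΦint : ∀ t, IntervalIntegrable (fun s => Φ (s, t)) volume 0 1 :=
    fun t => (hΦslice t).intervalIntegrable _ _
  set A : ℝ → (EuclideanSpace ℂ (Fin n) →L[ℂ] EuclideanSpace ℂ (Fin n)) :=
    fun t => ∫ s in (0:ℝ)..1, Φ (s, t) with hAdef
  have hAc : Continuous A := param_integral_continuous hΦc
  have hA_apply : ∀ (t : ℝ) (u₀ : EuclideanSpace ℂ (Fin n)),
      A t u₀ = ∫ s in (0:ℝ)..1, (inner ℂ (F (s,t)) u₀ : ℂ) • F (s,t) := by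
    intro t u₀
    have h2 := (ContinuousLinearMap.apply ℂ (EuclideanSpace ℂ (Fin n)) u₀).intervalIntegral_comp_comm (hΦint t)
    have h3 : A t u₀ = (ContinuousLinearMap.apply ℂ (EuclideanSpace ℂ (Fin n)) u₀) (A t) := rfl
    rw [h3, hAdef]
    rw [← h2]
    apply intervalIntegral.integral_congr
    intro s _
    simp only [hΦdef, ContinuousLinearMap.apply_apply, ContinuousLinearMap.smulRight_apply,
      innerSL_apply_apply]
  -- injectivity of the Gram operator
  have hker : ∀ (t : ℝ) (u₀ : EuclideanSpace ℂ (Fin n)), A t u₀ = 0 → u₀ = 0 := by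
    intro t u₀ h0
    set φ : ℝ → ℂ := fun s => (inner ℂ u₀ (F (s,t)) : ℂ) with hφdef
    have hφc : Continuous φ := Continuous.inner continuous_const (hFslice t)
    have hint1 : IntervalIntegrable (fun s => (inner ℂ (F (s,t)) u₀ : ℂ) • F (s,t)) volume 0 1 :=
      Continuous.intervalIntegrable (u := fun s => (inner ℂ (F (s,t)) u₀ : ℂ) • F (s,t))
        ((Continuous.inner (𝕜 := ℂ) (hFslice t) continuous_const).smul (hFslice t)) _ _
    have hinner0 : (inner ℂ u₀ (A t u₀) : ℂ)
        = ((∫ s in (0:ℝ)..1, Complex.normSq (φ s) : ℝ) : ℂ) := by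
      rw [hA_apply t u₀]
      have h2 := (innerSL ℂ u₀).intervalIntegral_comp_comm hint1
      rw [show (inner ℂ u₀ (∫ s in (0:ℝ)..1, (inner ℂ (F (s,t)) u₀ : ℂ) • F (s,t)) : ℂ)
        = innerSL ℂ u₀ (∫ s in (0:ℝ)..1, (inner ℂ (F (s,t)) u₀ : ℂ) • F (s,t)) from rfl]
      rw [← h2, ← intervalIntegral.integral_ofReal]
      apply intervalIntegral.integral_congr
      intro s _
      simp only [innerSL_apply_apply, inner_smul_right, hφdef]
      rw [← inner_conj_symm (F (s,t)) u₀]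
      rw [Complex.normSq_eq_conj_mul_self]
      all_goals ring
    rw [h0, inner_zero_right] at hinner0
    have hreal : (∫ s in (0:ℝ)..1, Complex.normSq (φ s)) = 0 := by exact_mod_cast hinner0.symm
    have hφ0 : ∀ s ∈ Set.Icc (0:ℝ) 1, φ s = 0 := by
      by_contra hcon
      push_neg at hcon
      obtain ⟨s₀, hs₀, hne⟩ := hcon
      have hpos : 0 < ∫ s in (0:ℝ)..1, Complex.normSq (φ s) := by
        apply intervalIntegral.integral_pos (by norm_num)
        · exact (Complex.continuous_normSq.comp hφc).continuousOn
        · exact fun x _ => Complex.normSq_nonneg _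
        · exact ⟨s₀, hs₀, Complex.normSq_pos.mpr hne⟩
      rw [hreal] at hpos
      exact lt_irrefl _ hpos
    have hle : Submodule.span ℂ ((fun s => f (s, c t)) '' Set.Icc (0:ℝ) 1)
        ≤ LinearMap.ker (innerSL ℂ u₀ : EuclideanSpace ℂ (Fin n) →ₗ[ℂ] ℂ) := by
      rw [Submodule.span_le]
      rintro x ⟨s₀, hs₀, rfl⟩
      have hx : F (s₀, t) = f (s₀, c t) := by
        simp only [hFdef]
        rw [hc_eq s₀ hs₀]
      simp only [SetLike.mem_coe, LinearMap.mem_ker]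
      rw [show ((innerSL ℂ u₀ : EuclideanSpace ℂ (Fin n) →ₗ[ℂ] ℂ) (f (s₀, c t)) : ℂ) = (inner ℂ u₀ (f (s₀, c t)) : ℂ) from rfl, ← hx]
      exact hφ0 s₀ hs₀
    rw [hfull (c t) (hc_mem t)] at hle
    have hm : u₀ ∈ LinearMap.ker (innerSL ℂ u₀ : EuclideanSpace ℂ (Fin n) →ₗ[ℂ] ℂ) := hle Submodule.mem_top
    rw [LinearMap.mem_ker] at hm
    exact inner_self_eq_zero.mp hm
  -- the Gram operators are units
  have hunit : ∀ t, IsUnit (A t) := by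
    intro t
    have hinj : Function.Injective (A t) := by
      intro x y hxy
      have hd : A t (x - y) = 0 := by rw [map_sub, hxy, sub_self]
      exact sub_eq_zero.mp (hker t _ hd)
    have hsurj : Function.Surjective (A t) :=
      (LinearMap.injective_iff_surjective (f := ((A t : EuclideanSpace ℂ (Fin n) →ₗ[ℂ] EuclideanSpace ℂ (Fin n))))).mp hinj
    let e := LinearEquiv.ofBijective ((A t : EuclideanSpace ℂ (Fin n) →ₗ[ℂ] EuclideanSpace ℂ (Fin n))) ⟨hinj, hsurj⟩
    refine ⟨e.toContinuousLinearEquiv.toUnit, ?_⟩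
    ext x
    rfl
  -- inverse family, target and solution
  have hAinv : Continuous fun t => Ring.inverse (A t) := by
    rw [continuous_iff_continuousAt]
    intro t₀
    have h1 : ContinuousAt Ring.inverse (A t₀) := by
      have := NormedRing.inverse_continuousAt (hunit t₀).unit
      rwa [(hunit t₀).unit_spec] at this
    exact h1.comp hAc.continuousAt
  set v : ℝ → EuclideanSpace ℂ (Fin n) :=
    fun t => α (c t) - ∫ s in (0:ℝ)..1, F (s, t) with hvdef
  have hvc : Continuous v := by
    apply Continuous.sub
    · exact hα.comp_continuous hc_cont hc_mem
    · exact param_integral_continuous hFc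
  set u : ℝ → EuclideanSpace ℂ (Fin n) := fun t => Ring.inverse (A t) (v t) with hudef
  have huc : Continuous u := hAinv.clm_apply hvc
  have hAu : ∀ t, A t (u t) = v t := by
    intro t
    simp only [hudef]
    rw [← ContinuousLinearMap.mul_apply, Ring.mul_inverse_cancel _ (hunit t),
      ContinuousLinearMap.one_apply]
  -- the exact multiplier
  set g0 : ℝ × ℝ → ℂ := fun p => (inner ℂ (F p) (u p.2) : ℂ) with hg0def
  have hg0c : Continuous g0 := Continuous.inner hFc (huc.comp continuous_snd)
  have hexact : ∀ t, (∫ s in (0:ℝ)..1, g0 (s,t) • F (s,t)) = v t := by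
    intro t
    rw [← hAu t, hA_apply t (u t)]
  set b : ℝ × ℝ → ℂ := fun p => ((π/2 : ℝ) : ℂ) * g0 p with hbdef
  have hbc : Continuous b := continuous_const.mul hg0c
  set cc : ℝ × ℝ → ℝ := fun p => 1 + ‖b p‖ with hccdef
  have hccc : Continuous cc := continuous_const.add (continuous_norm.comp hbc)
  set G₁ : ℝ × ℝ → EuclideanSpace ℂ (Fin n) := fun p => b p • F p with hG₁def
  have hG₁c : Continuous G₁ := hbc.smul hFc
  set G₂ : ℝ × ℝ → EuclideanSpace ℂ (Fin n) :=
    fun p => (Complex.I * ((cc p : ℝ) : ℂ)) • F p with hG₂def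
  have hG₂c : Continuous G₂ :=
    (continuous_const.mul (Complex.continuous_ofReal.comp hccc)).smul hFc
  -- the oscillating weights
  set q₂ : ℝ → ℝ := fun x => Real.sin (2*π*x) with hq₂def
  set q₁ : ℝ → ℝ := fun x => |Real.sin (2*π*x)| - 2/π with hq₁def
  have hq₂c : Continuous q₂ := by
    simp only [hq₂def]; fun_prop
  have hq₁c : Continuous q₁ := by
    simp only [hq₁def]; fun_prop
  have hq₂per : Function.Periodic q₂ 1 := by
    intro x
    simp only [hq₂def]
    rw [show 2*π*(x+1) = 2*π*x + 2*π by ring, Real.sin_add_two_pi]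
  have hq₁per : Function.Periodic q₁ 1 := by
    intro x
    simp only [hq₁def]
    rw [show 2*π*(x+1) = 2*π*x + 2*π by ring, Real.sin_add_two_pi]
  have hq₂0 : (∫ x in (0:ℝ)..1, q₂ x) = 0 := integral_sin_two_pi
  have hq₁0 : (∫ x in (0:ℝ)..1, q₁ x) = 0 := by
    simp only [hq₁def]
    rw [intervalIntegral.integral_sub
      (((by fun_prop : Continuous fun x => |Real.sin (2*π*x)|)).intervalIntegrable _ _)
      intervalIntegrable_const]
    rw [integral_abs_sin_two_pi, intervalIntegral.integral_const]
    simp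
  have habs_sin : ∀ x : ℝ, |Real.sin x| ≤ 1 :=
    fun x => abs_le.mpr ⟨Real.neg_one_le_sin x, Real.sin_le_one x⟩
  have hpi_facts : 0 < π ∧ (2:ℝ) ≤ π := ⟨Real.pi_pos, Real.two_le_pi⟩
  have h2pi : 0 ≤ 2/π ∧ 2/π ≤ 1 := by
    constructor
    · positivity
    · rw [div_le_one hpi_facts.1]; exact hpi_facts.2
  have hq₂bd : ∀ x, |q₂ x| ≤ 2 := fun x => le_trans (habs_sin _) one_le_two
  have hq₁bd : ∀ x, |q₁ x| ≤ 2 := by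
    intro x
    simp only [hq₁def]
    rw [abs_le]
    have h1 : |Real.sin (2*π*x)| ≤ 1 := habs_sin _
    have h2 : (0:ℝ) ≤ |Real.sin (2*π*x)| := abs_nonneg _
    constructor <;> [linarith [h2pi.2]; linarith [h2pi.1]]
  obtain ⟨N₁, hN₁pos, hosc₁⟩ := osc_vanish G₁ hG₁c q₁ hq₁c hq₁per hq₁0 2 (by norm_num) hq₁bd
    (ε/2) (by linarith)
  obtain ⟨N₂, hN₂pos, hosc₂⟩ := osc_vanish G₂ hG₂c q₂ hq₂c hq₂per hq₂0 2 (by norm_num) hq₂bd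
    (ε/2) (by linarith)
  set N : ℕ := N₁ + N₂ with hNdef
  -- the multiplier
  set h : ℝ × ℝ → ℂ := fun p =>
    1 + ((|q₂ ((N:ℝ) * p.1)| : ℝ) : ℂ) * b p
      + ((q₂ ((N:ℝ) * p.1) : ℝ) : ℂ) * (Complex.I * ((cc p : ℝ) : ℂ)) with hhdef
  have hhc : Continuous h := by
    apply Continuous.add
    · apply Continuous.add continuous_const
      exact (Complex.continuous_ofReal.comp
          (continuous_abs.comp (hq₂c.comp (continuous_const.mul continuous_fst)))).mul hbc
    · exact (Complex.continuous_ofReal.comp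
          (hq₂c.comp (continuous_const.mul continuous_fst))).mul
        (continuous_const.mul (Complex.continuous_ofReal.comp hccc))
  -- nonvanishing
  have hnz : ∀ p : ℝ × ℝ, h p ≠ 0 := by
    intro p
    rcases eq_or_ne (q₂ ((N:ℝ) * p.1)) 0 with hS | hS
    · simp [hhdef, hS]
    · have him : (h p).im = |q₂ ((N:ℝ) * p.1)| * (b p).im + q₂ ((N:ℝ) * p.1) * cc p := by
        simp [hhdef, Complex.add_im, Complex.mul_im, Complex.ofReal_re, Complex.ofReal_im,
          Complex.I_re, Complex.I_im, Complex.one_im, Complex.mul_re]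
        all_goals ring
      have hcc_gt : |(b p).im| < cc p := by
        simp only [hccdef]
        have := Complex.abs_im_le_norm (b p)
        linarith
      have hne : (h p).im ≠ 0 := by
        rcases lt_or_gt_of_ne hS with hneg | hpos
        · have : (h p).im < 0 := by
            rw [him, abs_of_neg hneg]
            have h1 : -(b p).im ≤ |(b p).im| := neg_le_abs _
            have h2 : (b p).im ≤ |(b p).im| := le_abs_self _
            nlinarith
          exact ne_of_lt this
        · have : 0 < (h p).im := by
            rw [him, abs_of_pos hpos]
            have h1 : -(b p).im ≤ |(b p).im| := neg_le_abs _
            nlinarith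
          exact ne_of_gt this
      intro hzero
      rw [hzero] at hne
      simp at hne
  -- endpoint values
  have hend : ∀ t : ℝ, h (0, t) = 1 ∧ h (1, t) = 1 := by
    intro t
    have hz0 : q₂ (0:ℝ) = 0 := by
      simp [hq₂def]
    have hz1 : q₂ ((N:ℝ)) = 0 := by
      simp only [hq₂def]
      rw [show 2*π*(N:ℝ) = ((2*N : ℕ) : ℝ) * π by push_cast; ring, Real.sin_nat_mul_pi]
    constructor
    · simp [hhdef, hz0]
    · simp [hhdef, hz1]
  -- the main integral identity
  have hmain : ∀ t, (∫ s in (0:ℝ)..1, h (s,t) • F (s,t))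
      = (∫ s in (0:ℝ)..1, F (s,t)) + v t
        + ((∫ s in (0:ℝ)..1, q₁ ((N:ℝ)*s) • G₁ (s,t))
          + ∫ s in (0:ℝ)..1, q₂ ((N:ℝ)*s) • G₂ (s,t)) := by
    intro t
    have hsm : ∀ s : ℝ, h (s,t) • F (s,t)
        = F (s,t) + (|q₂ ((N:ℝ)*s)| • G₁ (s,t) + q₂ ((N:ℝ)*s) • G₂ (s,t)) := by
      intro s
      simp only [hhdef, hG₁def, hG₂def]
      rw [add_smul, add_smul, one_smul]
      rw [← Complex.real_smul, ← Complex.real_smul, smul_assoc, smul_assoc]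
      rw [add_assoc]
    rw [intervalIntegral.integral_congr (g := fun s =>
      F (s,t) + (|q₂ ((N:ℝ)*s)| • G₁ (s,t) + q₂ ((N:ℝ)*s) • G₂ (s,t))) (fun s _ => hsm s)]
    have hiF : IntervalIntegrable (fun s => F (s,t)) volume 0 1 :=
      (hFslice t).intervalIntegrable _ _
    have hcG₁ : Continuous fun s => |q₂ ((N:ℝ)*s)| • G₁ (s,t) :=
      ((continuous_abs.comp (hq₂c.comp (continuous_const.mul continuous_id))).smul
        (hG₁c.comp (continuous_id.prodMk continuous_const)))
    have hcG₂ : Continuous fun s => q₂ ((N:ℝ)*s) • G₂ (s,t) :=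
      ((hq₂c.comp (continuous_const.mul continuous_id)).smul
        (hG₂c.comp (continuous_id.prodMk continuous_const)))
    rw [intervalIntegral.integral_add hiF (Continuous.intervalIntegrable (u := fun s =>
      |q₂ ((N:ℝ)*s)| • G₁ (s,t) + q₂ ((N:ℝ)*s) • G₂ (s,t)) (hcG₁.add hcG₂) _ _)]
    rw [intervalIntegral.integral_add (hcG₁.intervalIntegrable _ _) (hcG₂.intervalIntegrable _ _)]
    -- now handle the absolute-value term
    have habs : ∀ z : ℝ, |q₂ z| = q₁ z + 2/π := by
      intro z
      simp only [hq₁def, hq₂def]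
      ring
    have hsplit2 : (∫ s in (0:ℝ)..1, |q₂ ((N:ℝ)*s)| • G₁ (s,t))
        = (∫ s in (0:ℝ)..1, q₁ ((N:ℝ)*s) • G₁ (s,t)) + v t := by
      have hpt : ∀ s : ℝ, |q₂ ((N:ℝ)*s)| • G₁ (s,t)
          = q₁ ((N:ℝ)*s) • G₁ (s,t) + (2/π) • G₁ (s,t) := by
        intro s
        rw [habs, add_smul]
      rw [intervalIntegral.integral_congr (g := fun s =>
        q₁ ((N:ℝ)*s) • G₁ (s,t) + (2/π) • G₁ (s,t)) (fun s _ => hpt s)]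
      have hc1 : Continuous fun s => q₁ ((N:ℝ)*s) • G₁ (s,t) :=
        ((hq₁c.comp (continuous_const.mul continuous_id)).smul
          (hG₁c.comp (continuous_id.prodMk continuous_const)))
      have hc2 : Continuous fun s => (2/π : ℝ) • G₁ (s,t) :=
        continuous_const.fun_smul (hG₁c.comp (continuous_id.prodMk continuous_const))
      rw [intervalIntegral.integral_add (hc1.intervalIntegrable _ _) (hc2.intervalIntegrable _ _)]
      congr 1
      rw [intervalIntegral.integral_smul]
      have hGv : (∫ s in (0:ℝ)..1, G₁ (s,t)) = (π/2 : ℝ) • v t := by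
        have hpt2 : ∀ s : ℝ, G₁ (s,t) = (π/2 : ℝ) • (g0 (s,t) • F (s,t)) := by
          intro s
          simp only [hG₁def, hbdef]
          rw [mul_smul, ← Complex.coe_algebraMap, IsScalarTower.algebraMap_smul]
        rw [intervalIntegral.integral_congr (g := fun s => (π/2 : ℝ) • (g0 (s,t) • F (s,t)))
          (fun s _ => hpt2 s)]
        rw [intervalIntegral.integral_smul, hexact t]
      rw [hGv, smul_smul]
      rw [show (2/π) * (π/2) = (1:ℝ) by field_simp, one_smul]
    rw [hsplit2]
    abel
  refine ⟨h, hhc.continuousOn, fun p _ => hnz p, fun t _ => hend t, ?_⟩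
  intro t ht
  have hcongr : (∫ s in (0:ℝ)..1, h (s,t) • f (s,t)) = ∫ s in (0:ℝ)..1, h (s,t) • F (s,t) := by
    apply intervalIntegral.integral_congr
    intro s hs
    rw [Set.uIcc_of_le (by norm_num : (0:ℝ) ≤ 1)] at hs
    exact congrArg (fun y => h (s,t) • y) (hFeq s hs t ht).symm
  rw [hcongr, hmain t]
  have hvt : v t = α t - ∫ s in (0:ℝ)..1, F (s,t) := by
    simp only [hvdef]
    rw [hc_eq t ht]
  rw [hvt]
  have hsum : (∫ s in (0:ℝ)..1, F (s,t)) + (α t - ∫ s in (0:ℝ)..1, F (s,t))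
      + ((∫ s in (0:ℝ)..1, q₁ ((N:ℝ)*s) • G₁ (s,t))
        + ∫ s in (0:ℝ)..1, q₂ ((N:ℝ)*s) • G₂ (s,t)) - α t
      = (∫ s in (0:ℝ)..1, q₁ ((N:ℝ)*s) • G₁ (s,t))
        + ∫ s in (0:ℝ)..1, q₂ ((N:ℝ)*s) • G₂ (s,t) := by
    abel
  rw [hsum]
  have h1 := hosc₁ N (Nat.le_add_right N₁ N₂) t ht
  have h2 := hosc₂ N (Nat.le_add_left N₂ N₁) t ht
  calc ‖(∫ s in (0:ℝ)..1, q₁ ((N:ℝ)*s) • G₁ (s,t))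
        + ∫ s in (0:ℝ)..1, q₂ ((N:ℝ)*s) • G₂ (s,t)‖
      ≤ ‖∫ s in (0:ℝ)..1, q₁ ((N:ℝ)*s) • G₁ (s,t)‖
        + ‖∫ s in (0:ℝ)..1, q₂ ((N:ℝ)*s) • G₂ (s,t)‖ := norm_add_le _ _
    _ < ε/2 + ε/2 := add_lt_add h1 h2
    _ = ε := by ring
end
end

section
/- Let n ≥ 2 and let S ⊆ 𝔄* be a nonempty set of nonzero null vectors in ℂⁿ. Then the ℂ-linear span of the union ⋃_{z∈S} T_z𝔄 of the tangent spaces to the null quadric at the points of S equals all of ℂⁿ if and only if S is not contained in a single complex ray ℂ·ν for some ν ∈ 𝔄* (equivalently, if and only if S contains two non-colinear vectors). -/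
private lemma dot_single (n : ℕ) (z : Fin n → ℂ) (j : Fin n) :
    ∑ i : Fin n, z i * ((Pi.single j 1 : Fin n → ℂ)) i = z j := by
  simp [Pi.single_apply, mul_ite, Finset.sum_ite_eq']

private lemma dot_sub_smul (n : ℕ) (w v u : Fin n → ℂ) (t : ℂ) :
    ∑ i : Fin n, w i * (v - t • u) i
      = (∑ i : Fin n, w i * v i) - t * ∑ i : Fin n, w i * u i := by
  simp [mul_sub, Finset.sum_sub_distrib, Finset.mul_sum, mul_left_comm]

/-- For a nonempty set `S` of nonzero null vectors in `ℂⁿ` (`n ≥ 2`), the `ℂ`-linear span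
of the union of the tangent spaces `T_z𝔄 = {v : ∑ⱼ zⱼ vⱼ = 0}` over `z ∈ S` equals `ℂⁿ`
if and only if `S` is not contained in a single complex ray `ℂ·ν` with `ν ∈ 𝔄*`. -/
theorem span_of_tangent_spaces_eq_top_iff_not_in_ray
    (n : ℕ) (hn : 2 ≤ n) (S : Set (Fin n → ℂ)) (hS : S.Nonempty)
    (hSnull : ∀ z ∈ S, (∑ j : Fin n, (z j) ^ 2 = 0) ∧ z ≠ 0) :
    Submodule.span ℂ (⋃ z ∈ S, {v : Fin n → ℂ | ∑ j : Fin n, z j * v j = 0}) = ⊤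
      ↔ ¬ ∃ ν : Fin n → ℂ, (∑ j : Fin n, (ν j) ^ 2 = 0) ∧ ν ≠ 0 ∧
            S ⊆ {u : Fin n → ℂ | ∃ c : ℂ, u = c • ν} := by
  constructor
  · rintro htop ⟨ν, hνnull, hν0, hsub⟩
    -- the span is contained in the kernel of the functional `v ↦ ∑ ν j * v j`
    set K : Submodule ℂ (Fin n → ℂ) :=
      LinearMap.ker (∑ j : Fin n, ν j • (LinearMap.proj j : (Fin n → ℂ) →ₗ[ℂ] ℂ)) with hK
    have hker : ∀ v : Fin n → ℂ, v ∈ K ↔ ∑ j : Fin n, ν j * v j = 0 := by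
      intro v
      simp [hK, LinearMap.mem_ker, LinearMap.sum_apply, smul_eq_mul]
    have hle : Submodule.span ℂ (⋃ z ∈ S, {v : Fin n → ℂ | ∑ j : Fin n, z j * v j = 0}) ≤ K := by
      apply Submodule.span_le.mpr
      rintro v hv
      simp only [Set.mem_iUnion] at hv
      obtain ⟨z, hzS, hv⟩ := hv
      obtain ⟨c, rfl⟩ := hsub hzS
      have hc : c ≠ 0 := by
        rintro rfl
        exact (hSnull _ hzS).2 (by simp)
      have hv' : c * ∑ j : Fin n, ν j * v j = 0 := by
        rw [Finset.mul_sum]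
        simpa [Pi.smul_apply, smul_eq_mul, mul_assoc, mul_left_comm] using hv
      rw [SetLike.mem_coe, hker]
      exact (mul_eq_zero.mp hv').resolve_left hc
    rw [htop, top_le_iff] at hle
    obtain ⟨j, hj⟩ := Function.ne_iff.mp hν0
    have : ((Pi.single j 1 : Fin n → ℂ)) ∈ K := hle ▸ Submodule.mem_top
    rw [hker, dot_single] at this
    exact hj this
  · intro h
    obtain ⟨z, hzS⟩ := hS
    obtain ⟨hznull, hz0⟩ := hSnull z hzS
    -- there is `w ∈ S` not a multiple of `z`
    have hns : ¬ S ⊆ {u : Fin n → ℂ | ∃ c : ℂ, u = c • z} := fun hsub =>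
      h ⟨z, hznull, hz0, hsub⟩
    obtain ⟨w, hwS, hw⟩ := Set.not_subset.mp hns
    simp only [Set.mem_setOf_eq, not_exists] at hw
    obtain ⟨j, hj⟩ := Function.ne_iff.mp hz0
    set c : ℂ := w j / z j with hc
    obtain ⟨k, hk⟩ := Function.ne_iff.mp (hw c)
    have hk' : (c • z) k = c * z k := rfl
    -- the vector u lies in T_z but not in the w-hyperplane
    set u : Fin n → ℂ := z j • (Pi.single k 1 : Fin n → ℂ) - z k • (Pi.single j 1 : Fin n → ℂ) with hu
    have hdotsum : ∀ y : Fin n → ℂ, ∑ i : Fin n, y i * u i = z j * y k - z k * y j := by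
      intro y
      rw [hu]
      rw [Finset.sum_congr rfl (fun i _ =>
        show y i * _ = z j * (y i * (Pi.single k 1 : Fin n → ℂ) i) - z k * (y i * (Pi.single j 1 : Fin n → ℂ) i) by
          simp [Pi.smul_apply, smul_eq_mul]; ring)]
      rw [Finset.sum_sub_distrib, ← Finset.mul_sum, ← Finset.mul_sum,
        dot_single, dot_single]
    have huz : ∑ i : Fin n, z i * u i = 0 := by rw [hdotsum]; ring
    have hd : ∑ i : Fin n, w i * u i ≠ 0 := by
      rw [hdotsum]
      intro h0
      have hj' : z j ≠ 0 := hj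
      apply hk
      rw [hk', hc, div_mul_eq_mul_div, eq_div_iff hj']
      linear_combination h0
    rw [eq_top_iff]
    rintro v -
    set t : ℂ := (∑ i : Fin n, w i * v i) / (∑ i : Fin n, w i * u i) with ht
    have hv1 : (v - t • u) ∈ {x : Fin n → ℂ | ∑ i : Fin n, w i * x i = 0} := by
      show ∑ i : Fin n, w i * (v - t • u) i = 0
      rw [dot_sub_smul, ht, div_mul_cancel₀ _ hd, sub_self]
    have hv2 : u ∈ {x : Fin n → ℂ | ∑ i : Fin n, z i * x i = 0} := huz
    have hmem1 : (v - t • u) ∈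
        Submodule.span ℂ (⋃ z ∈ S, {x : Fin n → ℂ | ∑ i : Fin n, z i * x i = 0}) :=
      Submodule.subset_span (Set.mem_biUnion hwS hv1)
    have hmem2 : u ∈
        Submodule.span ℂ (⋃ z ∈ S, {x : Fin n → ℂ | ∑ i : Fin n, z i * x i = 0}) :=
      Submodule.subset_span (Set.mem_biUnion hzS hv2)
    have := Submodule.add_mem _ hmem1 (Submodule.smul_mem _ t hmem2)
    simpa using this
end

section
/- Define Z : ℂ ∖ {0} → ℂ⁴ by Z(ζ) = ( i(ζ + 1/ζ), ζ − 1/ζ, (i/2)(ζ² − 1/ζ²), (1/2)(ζ² + 1/ζ²) ). Then Z is holomorphic, its derivative satisfies ∑_{j=1}^4 (Zⱼ'(ζ))² = 0 and Z'(ζ) ≠ 0 for every ζ ∈ ℂ ∖ {0} (so Z' takes values in the punctured null quadric 𝔄* ⊆ ℂ⁴), and the harmonic map X = Re ∘ Z : ℂ ∖ {0} → ℝ⁴ is a proper map, i.e. the preimage under X of every compact subset of ℝ⁴ is compact. -/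
open Complex

private lemma mobius_aux (M q t u v : ℝ) (hq : 0 < q) (ht : 0 < t)
    (hqt : q ^ 2 * t = 1) (hu0 : 0 ≤ u) (hv0 : 0 ≤ v)
    (huv : u ^ 2 + v ^ 2 = q ^ 2) (hu : u * (1 + t) ≤ 2 * M) (hv : v * (1 + t) ≤ 2 * M) :
    q ≤ 4 * M ∧ 1 ≤ q * (4 * M) := by
  have huv' : q ≤ u + v := by nlinarith [mul_nonneg hu0 hv0]
  have h4 : q * (1 + t) ≤ 4 * M := by nlinarith
  constructor
  · nlinarith
  · have hqt' : q * (q * t) = 1 := by nlinarith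
    nlinarith [mul_le_mul_of_nonneg_left h4 hq.le, mul_pos hq ht]

private lemma mobius_aux2 (M n q R : ℝ) (hn : 0 ≤ n) (hR : 0 < R) (hR2 : R ^ 2 = 4 * M)
    (hnq : n ^ 2 = q) (h1 : q ≤ 4 * M) (h2 : 1 ≤ q * (4 * M)) :
    n ≤ R ∧ R⁻¹ ≤ n := by
  constructor
  · nlinarith
  · rw [← one_div, div_le_iff₀ hR]
    nlinarith [sq_nonneg (n*R - 1), mul_nonneg hn hR.le]

/-- The map `Z(ζ) = (i(ζ + 1/ζ), ζ − 1/ζ, (i/2)(ζ² − 1/ζ²), (1/2)(ζ² + 1/ζ²))` is a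
holomorphic null immersion of `ℂ ∖ {0}` into `ℂ⁴` (its derivative is nowhere vanishing and
takes values in the punctured null quadric), and `X = Re ∘ Z : ℂ ∖ {0} → ℝ⁴` is a proper
map: preimages of compact sets are compact. -/
theorem proper_minimal_Mobius_strip_null_curve
    (Z : ℂ → Fin 4 → ℂ)
    (hZ : ∀ ζ : ℂ, Z ζ = ![Complex.I * (ζ + ζ⁻¹), ζ - ζ⁻¹,
        (Complex.I / 2) * (ζ ^ 2 - (ζ ^ 2)⁻¹), (1 / 2) * (ζ ^ 2 + (ζ ^ 2)⁻¹)])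
    (X : ℂ → Fin 4 → ℝ)
    (hX : ∀ ζ : ℂ, ∀ j : Fin 4, X ζ j = (Z ζ j).re) :
    DifferentiableOn ℂ Z {(0:ℂ)}ᶜ ∧
    (∀ ζ : ℂ, ζ ≠ 0 → deriv Z ζ ≠ 0 ∧ ∑ j : Fin 4, (deriv Z ζ j) ^ 2 = 0) ∧
    (∀ K : Set (Fin 4 → ℝ), IsCompact K →
      IsCompact {ζ : ℂ | ζ ≠ 0 ∧ X ζ ∈ K}) := by
  have hZfun : Z = fun ζ : ℂ => ![Complex.I * (ζ + ζ⁻¹), ζ - ζ⁻¹,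
      (Complex.I / 2) * (ζ ^ 2 - (ζ ^ 2)⁻¹), (1 / 2) * (ζ ^ 2 + (ζ ^ 2)⁻¹)] := funext hZ
  have key : ∀ ζ : ℂ, ζ ≠ 0 →
      HasDerivAt Z (![I * (1 - (ζ^2)⁻¹), 1 + (ζ^2)⁻¹, I * (ζ + (ζ^3)⁻¹), ζ - (ζ^3)⁻¹]) ζ := by
    intro ζ h
    have h2 : (ζ^2 : ℂ) ≠ 0 := pow_ne_zero _ h
    rw [hZfun, hasDerivAt_pi]
    intro i
    fin_cases i <;> simp only [Matrix.cons_val_zero, Matrix.cons_val_one, Matrix.head_cons,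
      Matrix.cons_val_two, Matrix.tail_cons, Matrix.cons_val_three, Fin.reduceFinMk, Matrix.cons_val]
    · have := ((hasDerivAt_id ζ).add (hasDerivAt_inv h)).const_mul I
      refine this.congr_deriv ?_; field_simp; ring
    · have := (hasDerivAt_id ζ).sub (hasDerivAt_inv h)
      refine this.congr_deriv ?_; field_simp; ring
    · have := ((hasDerivAt_pow 2 ζ).sub ((hasDerivAt_pow 2 ζ).inv h2)).const_mul (I/2)
      refine this.congr_deriv ?_; field_simp; ring
    · have := ((hasDerivAt_pow 2 ζ).add ((hasDerivAt_pow 2 ζ).inv h2)).const_mul (1/2 : ℂ)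
      refine this.congr_deriv ?_; field_simp; ring
  refine ⟨?_, ?_, ?_⟩
  · intro ζ hζ
    exact ((key ζ hζ).differentiableAt).differentiableWithinAt
  · intro ζ hζ
    rw [(key ζ hζ).deriv]
    constructor
    · intro hc
      have h0 := congrFun hc 0
      have h1 := congrFun hc 1
      simp [I_ne_zero, sub_eq_zero] at h0 h1
      rcases h0 with rfl | rfl <;> norm_num at h1
    · simp [Fin.sum_univ_four]
      field_simp
      ring_nf
      simp [I_sq]
  · intro K hK
    obtain ⟨M0, hM0⟩ := hK.isBounded.subset_closedBall 0
    set M : ℝ := max M0 1 with hMdef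
    have hM1 : (1:ℝ) ≤ M := le_max_right _ _
    have hMpos : (0:ℝ) < M := lt_of_lt_of_le one_pos hM1
    have hXK : ∀ x ∈ K, ‖x‖ ≤ M := fun x hx => by
      have := hM0 hx
      rw [Metric.mem_closedBall, dist_zero_right] at this
      exact this.trans (le_max_left _ _)
    set R : ℝ := Real.sqrt (4 * M) with hRdef
    have hRpos : 0 < R := Real.sqrt_pos.mpr (by linarith)
    have hR2 : R ^ 2 = 4 * M := Real.sq_sqrt (by linarith)
    set A : Set ℂ := Metric.closedBall (0:ℂ) R ∩ {z : ℂ | R⁻¹ ≤ ‖z‖} with hAdef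
    have hA0 : ∀ z ∈ A, z ≠ 0 := by
      intro z hz hz0
      have hz2 := hz.2
      rw [hz0] at hz2
      simp only [Set.mem_setOf_eq, norm_zero] at hz2
      exact absurd hz2 (not_le.mpr (inv_pos.mpr hRpos))
    -- the key norm estimate
    have hsub : {ζ : ℂ | ζ ≠ 0 ∧ X ζ ∈ K} ⊆ A := by
      rintro ζ ⟨hζ, hζK⟩
      have hnorm : ‖X ζ‖ ≤ M := hXK _ hζK
      have h2 : |X ζ 2| ≤ M := by
        have := norm_le_pi_norm (X ζ) 2
        rw [Real.norm_eq_abs] at this; exact this.trans hnorm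
      have h3 : |X ζ 3| ≤ M := by
        have := norm_le_pi_norm (X ζ) 3
        rw [Real.norm_eq_abs] at this; exact this.trans hnorm
      have hX2 : X ζ 2 = -(ζ^2).im/2 * (1 + ((Complex.normSq ζ)^2)⁻¹) := by
        rw [hX, hZ]
        show ((Complex.I / 2) * (ζ ^ 2 - (ζ ^ 2)⁻¹)).re = _
        simp only [Complex.inv_def, pow_two, map_mul]
        simp [Complex.mul_re, Complex.mul_im, Complex.normSq_apply]
        ring
      have hX3 : X ζ 3 = (ζ^2).re/2 * (1 + ((Complex.normSq ζ)^2)⁻¹) := by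
        rw [hX, hZ]
        show ((1 / 2 : ℂ) * (ζ ^ 2 + (ζ ^ 2)⁻¹)).re = _
        simp only [Complex.inv_def, pow_two, map_mul]
        simp [Complex.mul_re, Complex.mul_im, Complex.normSq_apply]
        ring
      have hqpos : 0 < Complex.normSq ζ := Complex.normSq_pos.mpr hζ
      set q : ℝ := Complex.normSq ζ with hqdef
      have hcd : (ζ^2).re ^ 2 + (ζ^2).im ^ 2 = q ^ 2 := by
        have h5 : Complex.normSq (ζ^2) = q ^ 2 := by rw [map_pow]
        rw [Complex.normSq_apply] at h5
        nlinarith [h5]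
      set t : ℝ := ((q:ℝ)^2)⁻¹ with htdef
      have htpos : 0 < t := inv_pos.mpr (by positivity)
      have hqt : q ^ 2 * t = 1 := mul_inv_cancel₀ (by positivity)
      have hone : (0:ℝ) ≤ 1 + t := by positivity
      have hvle : |(ζ^2).im| * (1 + t) ≤ 2 * M := by
        have heq : |X ζ 2| = |(ζ^2).im| / 2 * (1 + t) := by
          rw [hX2, _root_.abs_mul, _root_.abs_of_nonneg hone, _root_.abs_div,
            _root_.abs_neg]
          norm_num
        rw [heq] at h2
        linarith
      have hule : |(ζ^2).re| * (1 + t) ≤ 2 * M := by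
        have heq : |X ζ 3| = |(ζ^2).re| / 2 * (1 + t) := by
          rw [hX3, _root_.abs_mul, _root_.abs_of_nonneg hone, _root_.abs_div]
          norm_num
        rw [heq] at h3
        linarith
      have huv : |(ζ^2).re| ^ 2 + |(ζ^2).im| ^ 2 = q ^ 2 := by
        rw [_root_.sq_abs, _root_.sq_abs]; exact hcd
      obtain ⟨hq1, hq2⟩ := mobius_aux M q t _ _ hqpos htpos hqt (abs_nonneg _)
        (abs_nonneg _) huv hule hvle
      have hnormsq : ‖ζ‖ ^ 2 = q := by
        rw [hqdef, Complex.sq_norm]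
      obtain ⟨hb1, hb2⟩ := mobius_aux2 M ‖ζ‖ q R (norm_nonneg ζ) hRpos hR2 hnormsq hq1 hq2
      exact ⟨by rw [Metric.mem_closedBall, dist_zero_right]; exact hb1, hb2⟩
    have hAcomp : IsCompact A :=
      (isCompact_closedBall _ _).inter_right (isClosed_le continuous_const continuous_norm)
    have hXcont : ContinuousOn X {z : ℂ | z ≠ 0} := by
      have hXfun : X = fun ζ j => (Z ζ j).re := funext fun ζ => funext (hX ζ)
      rw [hXfun]
      apply continuousOn_pi.mpr
      intro j
      apply Complex.continuous_re.comp_continuousOn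
      rw [hZfun]
      have cinv : ContinuousOn (fun z : ℂ => z⁻¹) {z : ℂ | z ≠ 0} :=
        continuousOn_id.inv₀ fun z hz => hz
      have cinv2 : ContinuousOn (fun z : ℂ => (z^2)⁻¹) {z : ℂ | z ≠ 0} :=
        (continuousOn_id.pow 2).inv₀ fun z hz => pow_ne_zero 2 hz
      fin_cases j <;>
        simp only [Matrix.cons_val_zero, Matrix.cons_val_one, Matrix.head_cons,
          Matrix.cons_val_two, Matrix.tail_cons, Matrix.cons_val_three]
      · exact continuousOn_const.mul (continuousOn_id.add cinv)
      · exact continuousOn_id.sub cinv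
      · exact continuousOn_const.mul ((continuousOn_id.pow 2).sub cinv2)
      · exact continuousOn_const.mul ((continuousOn_id.pow 2).add cinv2)
    have hSeq : {ζ : ℂ | ζ ≠ 0 ∧ X ζ ∈ K} = A ∩ X ⁻¹' K := by
      ext ζ
      constructor
      · intro hζ; exact ⟨hsub hζ, hζ.2⟩
      · rintro ⟨hζA, hζK⟩; exact ⟨hA0 ζ hζA, hζK⟩
    rw [hSeq]
    have hclosed : IsClosed (A ∩ X ⁻¹' K) :=
      (hXcont.mono fun z hz => hA0 z hz).preimage_isClosed_of_isClosed
        hAcomp.isClosed hK.isClosed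
    exact hAcomp.of_isClosed_subset hclosed Set.inter_subset_left
end

section
/- Define X : ℂ ∖ {0} → ℝ⁴ by X(ζ) = Re( i(ζ + 1/ζ), ζ − 1/ζ, (i/2)(ζ² − 1/ζ²), (1/2)(ζ² + 1/ζ²) ). Then for all ζ₁, ζ₂ ∈ ℂ ∖ {0}, one has X(ζ₁) = X(ζ₂) if and only if ζ₂ = ζ₁ or ζ₂ = −1/conj(ζ₁), where conj denotes complex conjugation. (Hence X descends to an injective map of the Möbius strip (ℂ∖{0})/𝕴, where 𝕴(ζ) = −1/conj(ζ) is a fixed-point-free antiholomorphic involution.) -/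
/-- For `X = Re ∘ Z` with `Z(ζ) = (i(ζ + 1/ζ), ζ − 1/ζ, (i/2)(ζ² − 1/ζ²), (1/2)(ζ² + 1/ζ²))`
on `ℂ ∖ {0}`, one has `X(ζ₁) = X(ζ₂)` iff `ζ₂ = ζ₁` or `ζ₂ = −1/conj(ζ₁)`. Hence `X`
descends to an injective map of the Möbius strip `(ℂ∖{0})/𝕴`, `𝕴(ζ) = −1/conj(ζ)`. -/
theorem Mobius_strip_identification
    (X : ℂ → Fin 4 → ℝ)
    (hX : ∀ ζ : ℂ, ∀ j : Fin 4, X ζ j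
      = (![Complex.I * (ζ + ζ⁻¹), ζ - ζ⁻¹,
          (Complex.I / 2) * (ζ ^ 2 - (ζ ^ 2)⁻¹), (1 / 2) * (ζ ^ 2 + (ζ ^ 2)⁻¹)] j).re)
    (ζ₁ ζ₂ : ℂ) (h1 : ζ₁ ≠ 0) (h2 : ζ₂ ≠ 0) :
    X ζ₁ = X ζ₂ ↔ (ζ₂ = ζ₁ ∨ ζ₂ = -((starRingEnd ℂ) ζ₁)⁻¹) := by
  have hc1 : (starRingEnd ℂ) ζ₁ ≠ 0 := by simpa using h1
  constructor
  · intro h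
    have E0 := congrFun h 0
    have E1 := congrFun h 1
    have E2 := congrFun h 2
    have E3 := congrFun h 3
    simp only [hX, Matrix.cons_val_zero, Matrix.cons_val_one, Matrix.head_cons,
      Matrix.cons_val_two, Matrix.tail_cons, Matrix.cons_val_three] at E0 E1 E2 E3
    have hw : ζ₁ - ((starRingEnd ℂ) ζ₁)⁻¹ = ζ₂ - ((starRingEnd ℂ) ζ₂)⁻¹ := by
      apply Complex.ext
      · simpa [← map_inv₀, Complex.sub_re, Complex.conj_re] using E1
      · simp only [← map_inv₀, Complex.sub_im, Complex.conj_im]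
        simp only [Complex.mul_re, Complex.I_re, Complex.I_im, Complex.add_re,
          Complex.add_im] at E0
        linarith
    have hq : ζ₁^2 + (((starRingEnd ℂ) ζ₁)^2)⁻¹ = ζ₂^2 + (((starRingEnd ℂ) ζ₂)^2)⁻¹ := by
      have k1 : ∀ z : ℂ, (((starRingEnd ℂ) z)^2)⁻¹ = (starRingEnd ℂ) ((z^2)⁻¹) := by
        intro z; rw [map_inv₀, map_pow]
      apply Complex.ext
      · simp only [k1, Complex.add_re, Complex.conj_re, Complex.inv_re, map_pow]
        simp only [Complex.mul_re, Complex.add_re, Complex.add_im, Complex.div_re,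
          Complex.div_im, Complex.one_re, Complex.one_im, Complex.inv_re, Complex.inv_im,
          map_pow] at E3
        norm_num at E3
        linarith
      · simp only [k1, Complex.add_im, Complex.conj_im, Complex.inv_im, map_pow]
        simp only [Complex.mul_re, Complex.div_re, Complex.div_im, Complex.I_re,
          Complex.I_im, Complex.sub_re, Complex.sub_im, Complex.inv_re, Complex.inv_im,
          map_pow] at E2
        norm_num at E2
        linarith
    have key : (ζ₂ - ζ₁) * (ζ₂ + ((starRingEnd ℂ) ζ₁)⁻¹) = 0 := by
      linear_combination (((ζ₁ - ((starRingEnd ℂ) ζ₁)⁻¹) + (ζ₂ - ((starRingEnd ℂ) ζ₂)⁻¹)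
        - 2*ζ₂)/2) * hw - hq/2
    rcases mul_eq_zero.mp key with h' | h'
    · exact Or.inl (sub_eq_zero.mp h')
    · exact Or.inr (eq_neg_of_add_eq_zero_left h')
  · rintro (rfl | hz)
    · rfl
    · have conj_re : ∀ z w : ℂ, w = (starRingEnd ℂ) z → z.re = w.re := by
        rintro z w rfl; exact (Complex.conj_re z).symm
      funext j
      rw [hX, hX]
      fin_cases j
      · show (Complex.I * (ζ₁ + ζ₁⁻¹)).re = (Complex.I * (ζ₂ + ζ₂⁻¹)).re
        refine conj_re _ _ ?_
        rw [hz]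
        simp only [map_mul, map_add, map_inv₀, Complex.conj_I, inv_neg, inv_inv, neg_neg]
        ring
      · show (ζ₁ - ζ₁⁻¹).re = (ζ₂ - ζ₂⁻¹).re
        refine conj_re _ _ ?_
        rw [hz]
        simp only [map_sub, map_inv₀, inv_neg, inv_inv, neg_neg]
        ring
      · show ((Complex.I / 2) * (ζ₁ ^ 2 - (ζ₁ ^ 2)⁻¹)).re
            = ((Complex.I / 2) * (ζ₂ ^ 2 - (ζ₂ ^ 2)⁻¹)).re
        refine conj_re _ _ ?_
        rw [hz]
        simp only [map_mul, map_sub, map_inv₀, map_pow, map_div₀, Complex.conj_I, map_ofNat, ← inv_pow, inv_neg, inv_inv, neg_neg]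
        ring
      · show ((1 / 2 : ℂ) * (ζ₁ ^ 2 + (ζ₁ ^ 2)⁻¹)).re = ((1 / 2 : ℂ) * (ζ₂ ^ 2 + (ζ₂ ^ 2)⁻¹)).re
        refine conj_re _ _ ?_
        rw [hz]
        simp only [map_mul, map_add, map_inv₀, map_pow, map_div₀, map_one, map_ofNat, ← inv_pow, inv_neg, inv_inv, neg_neg]
        ring
end

section
/- Let n ≥ 2 and let A be a symmetric real n×n matrix. Then ⟨Au, u⟩ + ⟨Av, v⟩ > 0 for every pair of vectors u, v ∈ ℝⁿ with |u| = |v| = 1 and u · v = 0 if and only if for every nonzero null vector w ∈ 𝔄* ⊆ ℂⁿ the Hermitian value ∑_{j,k=1}^n A_{jk} wⱼ conj(w_k), which is a real number since A is real symmetric, is positive. (Thus the Hessian of a C² function has positive trace on every 2-plane — the function is strongly minimal plurisubharmonic — exactly when the Levi form of its extension to the tube, which is constant in the imaginary directions, is positive on all null vectors, i.e. the extension is strongly null plurisubharmonic.) -/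
private lemma quad_inner (n : ℕ) (A : Matrix (Fin n) (Fin n) ℝ)
    (u : EuclideanSpace ℝ (Fin n)) :
    (inner ℝ (Matrix.toEuclideanLin A u) u : ℝ) = ∑ j, ∑ k, A j k * u j * u k := by
  simp [Matrix.toEuclideanLin, inner, Matrix.mulVec, dotProduct, Finset.sum_mul,
    mul_comm, mul_left_comm]
  refine Finset.sum_congr rfl fun j _ => ?_
  rw [Finset.mul_sum]
  exact Finset.sum_congr rfl fun k _ => by ring

private lemma csum_eq (n : ℕ) (A : Matrix (Fin n) (Fin n) ℝ) (hA : A.IsSymm)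
    (w : Fin n → ℂ) :
    (∑ j : Fin n, ∑ k : Fin n, (A j k : ℂ) * w j * (starRingEnd ℂ) (w k))
      = (((∑ j, ∑ k, A j k * (w j).re * (w k).re)
        + (∑ j, ∑ k, A j k * (w j).im * (w k).im) : ℝ) : ℂ) := by
  have himag : (∑ j : Fin n, ∑ k : Fin n, A j k * ((w j).im * (w k).re - (w j).re * (w k).im)) = 0 := by
    have h : (∑ j : Fin n, ∑ k : Fin n, A j k * ((w j).im * (w k).re))
        = ∑ j : Fin n, ∑ k : Fin n, A j k * ((w j).re * (w k).im) := by
      rw [Finset.sum_comm]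
      refine Finset.sum_congr rfl fun j _ => Finset.sum_congr rfl fun k _ => ?_
      rw [Matrix.IsSymm.apply hA j k]; ring
    simp only [mul_sub, Finset.sum_sub_distrib, h, sub_self]
  have hterm : ∀ j k : Fin n, (A j k : ℂ) * w j * (starRingEnd ℂ) (w k)
      = (↑(A j k * ((w j).re * (w k).re) + A j k * ((w j).im * (w k).im)) : ℂ)
        + ↑(A j k * ((w j).im * (w k).re - (w j).re * (w k).im)) * Complex.I := by
    intro j k
    apply Complex.ext <;>
      simp [Complex.mul_re, Complex.mul_im] <;> ring
  simp only [hterm, Finset.sum_add_distrib, ← Complex.ofReal_sum, ← Finset.sum_mul, himag]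
  push_cast
  simp [Finset.sum_add_distrib]
  ring_nf

/-- A symmetric real `n×n` matrix `A` satisfies `⟨Au,u⟩ + ⟨Av,v⟩ > 0` for all orthonormal
pairs `u, v ∈ ℝⁿ` (positive trace on every 2-plane) if and only if for every nonzero null
vector `w ∈ 𝔄* ⊆ ℂⁿ` the Hermitian value `∑_{j,k} A_{jk} wⱼ conj(w_k)` is a positive real
number. -/
theorem strongly_minimal_psh_iff_null_psh
    (n : ℕ) (hn : 2 ≤ n) (A : Matrix (Fin n) (Fin n) ℝ) (hA : A.IsSymm) :
    (∀ u v : EuclideanSpace ℝ (Fin n), ‖u‖ = 1 → ‖v‖ = 1 → inner ℝ u v = (0:ℝ) →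
        0 < (inner ℝ (Matrix.toEuclideanLin A u) u : ℝ)
            + (inner ℝ (Matrix.toEuclideanLin A v) v : ℝ))
      ↔ (∀ w : Fin n → ℂ, w ≠ 0 → (∑ j : Fin n, (w j) ^ 2) = 0 →
          ∃ r : ℝ, 0 < r ∧
            (∑ j : Fin n, ∑ k : Fin n, (A j k : ℂ) * w j * (starRingEnd ℂ) (w k)) = r) := by
  constructor
  · intro H w hw0 hnull
    set x : EuclideanSpace ℝ (Fin n) := WithLp.toLp 2 (fun j => (w j).re) with hxdef
    set y : EuclideanSpace ℝ (Fin n) := WithLp.toLp 2 (fun j => (w j).im) with hydef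
    have him : (∑ j, (w j).re * (w j).im) = 0 := by
      have h2 : (∑ j, ((w j).re * (w j).im + (w j).im * (w j).re)) = 0 := by
        simpa [Complex.mul_im, pow_two] using congrArg Complex.im hnull
      rw [Finset.sum_add_distrib] at h2
      simp only [mul_comm] at h2
      linarith
    have hsq : (∑ j, (w j).re ^ 2) = ∑ j, (w j).im ^ 2 := by
      have hre : (∑ j, ((w j).re * (w j).re - (w j).im * (w j).im)) = 0 := by
        simpa [Complex.mul_re, pow_two] using congrArg Complex.re hnull
      rw [Finset.sum_sub_distrib] at hre
      simp only [← pow_two] at hre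
      linarith
    have hxx : (inner ℝ x x : ℝ) = ∑ j, (w j).re ^ 2 := by
      rw [hxdef, PiLp.inner_apply]
      simp [sq]
    have hyy : (inner ℝ y y : ℝ) = ∑ j, (w j).im ^ 2 := by
      rw [hydef, PiLp.inner_apply]
      simp [sq]
    have hxy : (inner ℝ x y : ℝ) = 0 := by
      simpa [PiLp.inner_apply, hxdef, hydef, mul_comm] using him
    have hnormeq : ‖x‖ = ‖y‖ := by
      refine (sq_eq_sq₀ (norm_nonneg x) (norm_nonneg y)).mp ?_
      rw [← real_inner_self_eq_norm_sq, ← real_inner_self_eq_norm_sq, hxx, hyy, hsq]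
    have hx0 : x ≠ 0 := by
      intro hx
      apply hw0
      have hy : ‖y‖ = 0 := by rw [← hnormeq, hx, norm_zero]
      have hy0 : y = 0 := norm_eq_zero.mp hy
      funext j
      have h1 : (w j).re = 0 := congrFun (congrArg (fun (z : EuclideanSpace ℝ (Fin n)) => (z : Fin n → ℝ)) hx) j
      have h2 : (w j).im = 0 := congrFun (congrArg (fun (z : EuclideanSpace ℝ (Fin n)) => (z : Fin n → ℝ)) hy0) j
      exact Complex.ext h1 h2
    have ht : 0 < ‖x‖ := norm_pos_iff.mpr hx0
    set t : ℝ := ‖x‖ with htdef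
    set u : EuclideanSpace ℝ (Fin n) := t⁻¹ • x with hudef
    set v : EuclideanSpace ℝ (Fin n) := t⁻¹ • y with hvdef
    have hu1 : ‖u‖ = 1 := by
      rw [hudef, norm_smul, norm_inv, Real.norm_eq_abs, abs_of_pos ht]
      field_simp
      exact htdef.symm
    have hv1 : ‖v‖ = 1 := by
      rw [hvdef, norm_smul, norm_inv, Real.norm_eq_abs, abs_of_pos ht, ← hnormeq]
      field_simp
    have huv : (inner ℝ u v : ℝ) = 0 := by
      rw [hudef, hvdef, real_inner_smul_left, real_inner_smul_right, hxy]
      ring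
    have hpos := H u v hu1 hv1 huv
    rw [quad_inner, quad_inner] at hpos
    have hscale : ∀ j k : Fin n, A j k * u j * u k = t⁻¹ * t⁻¹ * (A j k * x j * x k) := by
      intro j k
      simp only [hudef, PiLp.smul_apply, smul_eq_mul]
      ring
    have hscale' : ∀ j k : Fin n, A j k * v j * v k = t⁻¹ * t⁻¹ * (A j k * y j * y k) := by
      intro j k
      simp only [hvdef, PiLp.smul_apply, smul_eq_mul]
      ring
    simp only [hscale, hscale', ← Finset.mul_sum, ← mul_add] at hpos
    have htne : t ≠ 0 := ne_of_gt ht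
    have hsum : 0 < (∑ j, ∑ k, A j k * x j * x k) + ∑ j, ∑ k, A j k * y j * y k := by
      have h := mul_pos (mul_pos ht ht) hpos
      have heq : t * t * (t⁻¹ * t⁻¹ * ((∑ j, ∑ k, A j k * x j * x k) + ∑ j, ∑ k, A j k * y j * y k))
          = (∑ j, ∑ k, A j k * x j * x k) + ∑ j, ∑ k, A j k * y j * y k := by
        field_simp
      rwa [heq] at h
    refine ⟨(∑ j, ∑ k, A j k * x j * x k) + ∑ j, ∑ k, A j k * y j * y k, hsum, ?_⟩
    rw [csum_eq n A hA w]
  · intro H u v hu hv huv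
    set w : Fin n → ℂ := fun j => Complex.mk (u j) (v j) with hwdef
    have hwre : ∀ j, (w j).re = u j := fun j => rfl
    have hwim : ∀ j, (w j).im = v j := fun j => rfl
    have hw0 : w ≠ 0 := by
      intro h
      have hu0 : u = 0 := by
        ext j
        have := congrFun h j
        have : (w j) = 0 := this
        have := congrArg Complex.re this
        simpa [hwre] using this
      rw [hu0, norm_zero] at hu
      norm_num at hu
    have husq : (∑ j, u j * u j) = 1 := by
      have h := real_inner_self_eq_norm_sq u
      rw [hu, PiLp.inner_apply] at h
      simpa [sq] using h
    have hvsq : (∑ j, v j * v j) = 1 := by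
      have h := real_inner_self_eq_norm_sq v
      rw [hv, PiLp.inner_apply] at h
      simpa [sq] using h
    have huvs : (∑ j, u j * v j) = 0 := by
      simpa [PiLp.inner_apply, mul_comm] using huv
    have hnull : (∑ j : Fin n, (w j) ^ 2) = 0 := by
      apply Complex.ext
      · simpa [Complex.re_sum, pow_two, Complex.mul_re, hwre, hwim, Finset.sum_sub_distrib,
          husq, hvsq] using sub_self (1:ℝ)
      · have h2 : (∑ j, v j * u j) = 0 := by
          rw [← huvs]; exact Finset.sum_congr rfl fun j _ => mul_comm _ _
        have h3 : (∑ j, (u j * v j + v j * u j)) = 0 := by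
          rw [Finset.sum_add_distrib, huvs, h2, add_zero]
        simpa [Complex.im_sum, pow_two, Complex.mul_im, hwre, hwim] using h3
    obtain ⟨r, hr, hreq⟩ := H w hw0 hnull
    rw [csum_eq n A hA w] at hreq
    have : (∑ j, ∑ k, A j k * (w j).re * (w k).re) + (∑ j, ∑ k, A j k * (w j).im * (w k).im) = r := by
      exact_mod_cast hreq
    rw [quad_inner, quad_inner]
    simp only [hwre, hwim] at this
    rw [this]
    exact hr
end
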